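/- arXiv:math/0601490 — 2 statements merged into one kernel-verified Lean document; each statement's English description precedes it below -/
import Mathlib

section
/- For every r-less arrow term f : A ⊢ B of S≤, every f-closed set U of occurrences of variables in A, and every atomic subformula x≤y of B, a member of U is connected by Gf to the occurrence of x in x≤y if and only if a member of U is connected by Gf to the occurrence of y in x≤y. -/
/-! Formalization of categories of proofs for linear equality (Dosen-Petric),
with the generality functor G into the category Br of Brauerian diagrams,
represented here by the matching relation on occurrences of variables. -/

namespace DP

/-- Formulae: atomic formulae `x R y` (for the binary predicate in question),
the constant true, and conjunctions. -/
inductive Fm (V : Type) : Type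
  | rel : V → V → Fm V
  | top : Fm V
  | and : Fm V → Fm V → Fm V

/-- Occurrences of variables in a formula: `false`/`true` are respectively the
left-hand and right-hand occurrences of variables in an atomic formula. -/
def Occ {V : Type} : Fm V → Type
  | .rel _ _ => Bool
  | .top => Empty
  | .and A B => Occ A ⊕ Occ B

/-- The matching relation on `source ⊕ target` induced by a relabelling function
from target occurrences to source occurrences. -/
def relabel {α β : Type} (φ : β → α) : α ⊕ β → α ⊕ β → Prop :=
  fun u v => (∃ o, u = Sum.inl (φ o) ∧ v = Sum.inr o) ∨
             (∃ o, u = Sum.inr o ∧ v = Sum.inl (φ o))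

/-- The matching relation induced by a relabelling function from source occurrences
to target occurrences. -/
def corelabel {α β : Type} (ψ : α → β) : α ⊕ β → α ⊕ β → Prop :=
  fun u v => (∃ o, u = Sum.inl o ∧ v = Sum.inr (ψ o)) ∨
             (∃ o, u = Sum.inr (ψ o) ∧ v = Sum.inl o)

/-- Horizontal (side-by-side) composition of Brauerian diagrams. -/
def tensRel {α β γ δ : Type}
    (p : α ⊕ β → α ⊕ β → Prop) (q : γ ⊕ δ → γ ⊕ δ → Prop) :
    (α ⊕ γ) ⊕ (β ⊕ δ) → (α ⊕ γ) ⊕ (β ⊕ δ) → Prop :=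
  fun u v =>
    (∃ x y, p x y ∧ u = Sum.map Sum.inl Sum.inl x ∧ v = Sum.map Sum.inl Sum.inl y) ∨
    (∃ x y, q x y ∧ u = Sum.map Sum.inr Sum.inr x ∧ v = Sum.map Sum.inr Sum.inr y)

/-- Vertical composition of Brauerian diagrams: two endpoints are matched in the
composite when they are joined by a path of edges through the middle points. -/
def compRel {α β γ : Type}
    (p : α ⊕ β → α ⊕ β → Prop) (q : β ⊕ γ → β ⊕ γ → Prop) :
    α ⊕ γ → α ⊕ γ → Prop :=
  fun u v => u ≠ v ∧
    Relation.ReflTransGen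
      (fun s t : α ⊕ β ⊕ γ =>
        (∃ x y, p x y ∧ s = Sum.map (fun a => a) Sum.inl x ∧
                        t = Sum.map (fun a => a) Sum.inl y) ∨
        (∃ x y, q x y ∧ s = Sum.inr x ∧ t = Sum.inr y))
      (Sum.map (fun a => a) Sum.inr u) (Sum.map (fun a => a) Sum.inr v)

/-- Arrow terms. -/
inductive Ar (V : Type) : Fm V → Fm V → Type
  | id (A : Fm V) : Ar V A A
  | comp {A B C : Fm V} : Ar V B C → Ar V A B → Ar V A C
  | tens {A B C D : Fm V} : Ar V A B → Ar V C D → Ar V (.and A C) (.and B D)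
  | bto (A B C : Fm V) : Ar V (.and A (.and B C)) (.and (.and A B) C)
  | bfrom (A B C : Fm V) : Ar V (.and (.and A B) C) (.and A (.and B C))
  | dto (A : Fm V) : Ar V (.and A .top) A
  | dfrom (A : Fm V) : Ar V A (.and A .top)
  | sto (A : Fm V) : Ar V (.and .top A) A
  | sfrom (A : Fm V) : Ar V A (.and .top A)
  | c (A B : Fm V) : Ar V (.and A B) (.and B A)
  | r (x : V) : Ar V .top (.rel x x)
  | t (x y z : V) : Ar V (.and (.rel x y) (.rel y z)) (.rel x z)

/-- The Brauerian diagram (matching relation on occurrences of variables in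
source and target) associated with an arrow term: the image under the functor G. -/
def GRel {V : Type} : ∀ {A B : Fm V}, Ar V A B → (Occ A ⊕ Occ B → Occ A ⊕ Occ B → Prop)
  | _, _, .id _ => relabel (fun o => o)
  | _, _, .comp g f => compRel (GRel f) (GRel g)
  | _, _, .tens f g => tensRel (GRel f) (GRel g)
  | _, _, .bto _ _ _ => relabel (fun o =>
      match o with
      | Sum.inl (Sum.inl a) => Sum.inl a
      | Sum.inl (Sum.inr b) => Sum.inr (Sum.inl b)
      | Sum.inr c => Sum.inr (Sum.inr c))
  | _, _, .bfrom _ _ _ => relabel (fun o =>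
      match o with
      | Sum.inl a => Sum.inl (Sum.inl a)
      | Sum.inr (Sum.inl b) => Sum.inl (Sum.inr b)
      | Sum.inr (Sum.inr c) => Sum.inr c)
  | _, _, .dto _ => relabel Sum.inl
  | _, _, .dfrom _ => corelabel Sum.inl
  | _, _, .sto _ => relabel Sum.inr
  | _, _, .sfrom _ => corelabel Sum.inr
  | _, _, .c _ _ => relabel Sum.swap
  | _, _, .r _ => fun u v =>
      (u = Sum.inr false ∧ v = Sum.inr true) ∨ (u = Sum.inr true ∧ v = Sum.inr false)
  | _, _, .t _ _ _ => fun u v =>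
      (u = Sum.inl (Sum.inl false) ∧ v = Sum.inr false) ∨
      (u = Sum.inr false ∧ v = Sum.inl (Sum.inl false)) ∨
      (u = Sum.inl (Sum.inr true) ∧ v = Sum.inr true) ∨
      (u = Sum.inr true ∧ v = Sum.inl (Sum.inr true)) ∨
      (u = Sum.inl (Sum.inl true) ∧ v = Sum.inl (Sum.inr false)) ∨
      (u = Sum.inl (Sum.inr false) ∧ v = Sum.inl (Sum.inl true))

/-- Equality of arrow terms: the smallest congruence generated by the defining
equations of the category. -/
inductive Eqv {V : Type} : ∀ {A B : Fm V}, Ar V A B → Ar V A B → Prop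
  | refl {A B : Fm V} (f : Ar V A B) : Eqv f f
  | symm {A B : Fm V} {f g : Ar V A B} : Eqv f g → Eqv g f
  | trans {A B : Fm V} {f g h : Ar V A B} : Eqv f g → Eqv g h → Eqv f h
  | congr_comp {A B C : Fm V} {g g' : Ar V B C} {f f' : Ar V A B} :
      Eqv g g' → Eqv f f' → Eqv (g.comp f) (g'.comp f')
  | congr_tens {A B C D : Fm V} {f f' : Ar V A B} {g g' : Ar V C D} :
      Eqv f f' → Eqv g g' → Eqv (f.tens g) (f'.tens g')
  | id_comp {A B : Fm V} (f : Ar V A B) : Eqv ((Ar.id B).comp f) f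
  | comp_id {A B : Fm V} (f : Ar V A B) : Eqv (f.comp (Ar.id A)) f
  | comp_assoc {A B C D : Fm V} (h : Ar V C D) (g : Ar V B C) (f : Ar V A B) :
      Eqv ((h.comp g).comp f) (h.comp (g.comp f))
  | tens_id (A B : Fm V) : Eqv ((Ar.id A).tens (Ar.id B)) (Ar.id (.and A B))
  | tens_comp {A1 B1 C1 A2 B2 C2 : Fm V} (g1 : Ar V B1 C1) (f1 : Ar V A1 B1)
      (g2 : Ar V B2 C2) (f2 : Ar V A2 B2) :
      Eqv ((g1.comp f1).tens (g2.comp f2)) ((g1.tens g2).comp (f1.tens f2))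
  | nat_b {A B C D E F : Fm V} (f : Ar V A D) (g : Ar V B E) (h : Ar V C F) :
      Eqv (((f.tens g).tens h).comp (Ar.bto A B C)) ((Ar.bto D E F).comp (f.tens (g.tens h)))
  | nat_d {A D : Fm V} (f : Ar V A D) :
      Eqv (f.comp (Ar.dto A)) ((Ar.dto D).comp (f.tens (Ar.id .top)))
  | nat_s {A D : Fm V} (f : Ar V A D) :
      Eqv (f.comp (Ar.sto A)) ((Ar.sto D).comp ((Ar.id .top).tens f))
  | bb1 (A B C : Fm V) : Eqv ((Ar.bfrom A B C).comp (Ar.bto A B C)) (Ar.id (.and A (.and B C)))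
  | bb2 (A B C : Fm V) : Eqv ((Ar.bto A B C).comp (Ar.bfrom A B C)) (Ar.id (.and (.and A B) C))
  | dd1 (A : Fm V) : Eqv ((Ar.dfrom A).comp (Ar.dto A)) (Ar.id (.and A .top))
  | dd2 (A : Fm V) : Eqv ((Ar.dto A).comp (Ar.dfrom A)) (Ar.id A)
  | ss1 (A : Fm V) : Eqv ((Ar.sfrom A).comp (Ar.sto A)) (Ar.id (.and .top A))
  | ss2 (A : Fm V) : Eqv ((Ar.sto A).comp (Ar.sfrom A)) (Ar.id A)
  | pent (A B C D : Fm V) :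
      Eqv ((Ar.bto (.and A B) C D).comp (Ar.bto A B (.and C D)))
        (((Ar.bto A B C).tens (Ar.id D)).comp
          ((Ar.bto A (.and B C) D).comp ((Ar.id A).tens (Ar.bto B C D))))
  | bds (A C : Fm V) :
      Eqv (Ar.bto A .top C) (((Ar.dfrom A).tens (Ar.id C)).comp ((Ar.id A).tens (Ar.sto C)))
  | nat_c {A B D E : Fm V} (f : Ar V A D) (g : Ar V B E) :
      Eqv ((g.tens f).comp (Ar.c A B)) ((Ar.c D E).comp (f.tens g))
  | cc (A B : Fm V) : Eqv ((Ar.c B A).comp (Ar.c A B)) (Ar.id (.and A B))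
  | hex (A B C : Fm V) :
      Eqv (Ar.c A (.and B C))
        ((Ar.bto B C A).comp (((Ar.id B).tens (Ar.c A C)).comp
          ((Ar.bfrom B A C).comp (((Ar.c A B).tens (Ar.id C)).comp (Ar.bto A B C)))))
  | rtd (x y : V) :
      Eqv ((Ar.t x y y).comp ((Ar.id (.rel x y)).tens (Ar.r y))) (Ar.dto (.rel x y))
  | rts (x y : V) :
      Eqv ((Ar.t y y x).comp ((Ar.r y).tens (Ar.id (.rel y x)))) (Ar.sto (.rel y x))
  | tb (x y z u : V) :
      Eqv ((Ar.t x y u).comp ((Ar.id (.rel x y)).tens (Ar.t y z u)))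
        ((Ar.t x z u).comp (((Ar.t x y z).tens (Ar.id (.rel z u))).comp
          (Ar.bto (.rel x y) (.rel y z) (.rel z u))))

/-- An arrow term is r-less when no `r` occurs in it. -/
def rLess {V : Type} : ∀ {A B : Fm V}, Ar V A B → Prop
  | _, _, .r _ => False
  | _, _, .comp g f => rLess g ∧ rLess f
  | _, _, .tens f g => rLess f ∧ rLess g
  | _, _, _ => True

/-- `SameAtom u v` holds when `u` and `v` are respectively the left-hand and
right-hand occurrences of variables in one and the same atomic subformula. -/
inductive SameAtom {V : Type} : ∀ {A : Fm V}, Occ A → Occ A → Prop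
  | atom (x y : V) : SameAtom (A := Fm.rel x y) false true
  | andl {A B : Fm V} {u v : Occ A} :
      SameAtom u v → SameAtom (A := Fm.and A B) (Sum.inl u) (Sum.inl v)
  | andr {A B : Fm V} {u v : Occ B} :
      SameAtom u v → SameAtom (A := Fm.and A B) (Sum.inr u) (Sum.inr v)

/-- A set U of occurrences of variables in the source A of `f : A ⊢ B` is
f-closed when it is closed under being in the same atomic subformula of A and
under being connected by a cup of Gf. -/
def FClosed {V : Type} {A B : Fm V} (f : Ar V A B) (U : Set (Occ A)) : Prop :=
  ∀ u u' : Occ A,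
    (SameAtom u u' ∨ SameAtom u' u ∨ GRel f (Sum.inl u) (Sum.inl u')) →
    (u ∈ U ↔ u' ∈ U)

/-! ### Auxiliary machinery: matchings as fixpoint-free involutions -/

/-- A representation of a matching relation `p` on `α ⊕ β` (source `α`,
target `β`) by a fixpoint-free involution `σ` which moreover has no caps:
each target occurrence is matched to a source occurrence, via `τ`. -/
structure Mtch {α β : Type} (p : α ⊕ β → α ⊕ β → Prop) : Type where
  σ : α ⊕ β → α ⊕ β
  τ : β → α
  invol : ∀ u, σ (σ u) = u
  ff : ∀ u, σ u ≠ u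
  spec : ∀ u v, p u v ↔ σ u = v
  cap : ∀ b, σ (Sum.inr b) = Sum.inl (τ b)

namespace Mtch

variable {α β : Type} {p : α ⊕ β → α ⊕ β → Prop} (m : Mtch p)

theorem flip {u v} (h : m.σ u = v) : m.σ v = u := by rw [← h, m.invol]

theorem τ_eq {b a} (h : m.σ (Sum.inr b) = Sum.inl a) : m.τ b = a := by
  have hc := m.cap b; rw [h] at hc; exact (Sum.inl.inj hc).symm

theorem cap' (b : β) : m.σ (Sum.inl (m.τ b)) = Sum.inr b := m.flip (m.cap b)

theorem mem_iff (U : Set α) (u : β) :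
    (∃ w ∈ U, p (Sum.inl w) (Sum.inr u)) ↔ m.τ u ∈ U := by
  constructor
  · rintro ⟨w, hw, hp⟩
    have h2 : m.σ (Sum.inr u) = Sum.inl w := m.flip ((m.spec _ _).mp hp)
    rwa [m.τ_eq h2]
  · intro h
    exact ⟨m.τ u, h, (m.spec _ _).mpr (m.cap' u)⟩

end Mtch

/-! ### Matchings for relabelling diagrams -/

def relabelMtch {α β : Type} (φ : β → α) (φ' : α → β)
    (h1 : ∀ b, φ' (φ b) = b) (h2 : ∀ a, φ (φ' a) = a) : Mtch (relabel φ) where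
  σ := fun u => match u with | .inl a => .inr (φ' a) | .inr b => .inl (φ b)
  τ := φ
  invol := by
    rintro (a | b)
    · show Sum.inl (φ (φ' a)) = Sum.inl a
      rw [h2]
    · show Sum.inr (φ' (φ b)) = Sum.inr b
      rw [h1]
  ff := by rintro (a | b) <;> exact fun h => by cases h
  spec := by
    intro u v
    constructor
    · intro h
      unfold relabel at h
      rcases h with ⟨o, rfl, rfl⟩ | ⟨o, rfl, rfl⟩
      · show Sum.inr (φ' (φ o)) = Sum.inr o
        rw [h1]
      · rfl
    · intro h
      rcases u with a | b
      · exact Or.inl ⟨φ' a, by rw [h2], h.symm⟩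
      · exact Or.inr ⟨b, rfl, h.symm⟩
  cap := fun _ => rfl

def corelabelMtch {α β : Type} (ψ : α → β) (ψ' : β → α)
    (h1 : ∀ a, ψ' (ψ a) = a) (h2 : ∀ b, ψ (ψ' b) = b) : Mtch (corelabel ψ) where
  σ := fun u => match u with | .inl a => .inr (ψ a) | .inr b => .inl (ψ' b)
  τ := ψ'
  invol := by
    rintro (a | b)
    · show Sum.inl (ψ' (ψ a)) = Sum.inl a
      rw [h1]
    · show Sum.inr (ψ (ψ' b)) = Sum.inr b
      rw [h2]
  ff := by rintro (a | b) <;> exact fun h => by cases h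
  spec := by
    intro u v
    constructor
    · intro h
      unfold corelabel at h
      rcases h with ⟨o, rfl, rfl⟩ | ⟨o, rfl, rfl⟩
      · rfl
      · show Sum.inl (ψ' (ψ o)) = Sum.inl o
        rw [h1]
    · intro h
      rcases u with a | b
      · exact Or.inl ⟨a, rfl, h.symm⟩
      · exact Or.inr ⟨ψ' b, by rw [h2], h.symm⟩
  cap := fun _ => rfl

/-! ### Matchings for tensor diagrams -/

section TensSec

variable {α β γ δ : Type} {p : α ⊕ β → α ⊕ β → Prop} {q : γ ⊕ δ → γ ⊕ δ → Prop}

def tσ (mp : Mtch p) (mq : Mtch q) : (α ⊕ γ) ⊕ (β ⊕ δ) → (α ⊕ γ) ⊕ (β ⊕ δ)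
  | .inl (.inl a) => Sum.map Sum.inl Sum.inl (mp.σ (.inl a))
  | .inl (.inr c) => Sum.map Sum.inr Sum.inr (mq.σ (.inl c))
  | .inr (.inl b) => Sum.map Sum.inl Sum.inl (mp.σ (.inr b))
  | .inr (.inr d) => Sum.map Sum.inr Sum.inr (mq.σ (.inr d))

theorem tσ_embL (mp : Mtch p) (mq : Mtch q) (x : α ⊕ β) :
    tσ mp mq (Sum.map Sum.inl Sum.inl x) = Sum.map Sum.inl Sum.inl (mp.σ x) := by
  cases x <;> rfl

theorem tσ_embR (mp : Mtch p) (mq : Mtch q) (x : γ ⊕ δ) :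
    tσ mp mq (Sum.map Sum.inr Sum.inr x) = Sum.map Sum.inr Sum.inr (mq.σ x) := by
  cases x <;> rfl

theorem embL_inj (x y : α ⊕ β) :
    Sum.map (Sum.inl : α → α ⊕ γ) (Sum.inl : β → β ⊕ δ) x =
      Sum.map Sum.inl Sum.inl y → x = y := by
  rintro h
  rcases x with x | x <;> rcases y with y | y <;> simp_all

theorem embR_inj (x y : γ ⊕ δ) :
    Sum.map (Sum.inr : γ → α ⊕ γ) (Sum.inr : δ → β ⊕ δ) x =
      Sum.map Sum.inr Sum.inr y → x = y := by
  rintro h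
  rcases x with x | x <;> rcases y with y | y <;> simp_all

def tensMtch (mp : Mtch p) (mq : Mtch q) : Mtch (tensRel p q) where
  σ := tσ mp mq
  τ := Sum.map mp.τ mq.τ
  invol := by
    rintro ((a | c) | (b | d))
    · show tσ mp mq (tσ mp mq (Sum.map Sum.inl Sum.inl (Sum.inl a))) =
        Sum.map Sum.inl Sum.inl (Sum.inl a)
      rw [tσ_embL, tσ_embL, mp.invol]
    · show tσ mp mq (tσ mp mq (Sum.map Sum.inr Sum.inr (Sum.inl c))) =
        Sum.map Sum.inr Sum.inr (Sum.inl c)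
      rw [tσ_embR, tσ_embR, mq.invol]
    · show tσ mp mq (tσ mp mq (Sum.map Sum.inl Sum.inl (Sum.inr b))) =
        Sum.map Sum.inl Sum.inl (Sum.inr b)
      rw [tσ_embL, tσ_embL, mp.invol]
    · show tσ mp mq (tσ mp mq (Sum.map Sum.inr Sum.inr (Sum.inr d))) =
        Sum.map Sum.inr Sum.inr (Sum.inr d)
      rw [tσ_embR, tσ_embR, mq.invol]
  ff := by
    rintro ((a | c) | (b | d)) h
    · have h' : Sum.map (Sum.inl : α → α ⊕ γ) (Sum.inl : β → β ⊕ δ) (mp.σ (Sum.inl a)) =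
        Sum.map Sum.inl Sum.inl (Sum.inl a) := h
      exact mp.ff _ (embL_inj _ _ h')
    · have h' : Sum.map (Sum.inr : γ → α ⊕ γ) (Sum.inr : δ → β ⊕ δ) (mq.σ (Sum.inl c)) =
        Sum.map Sum.inr Sum.inr (Sum.inl c) := h
      exact mq.ff _ (embR_inj _ _ h')
    · have h' : Sum.map (Sum.inl : α → α ⊕ γ) (Sum.inl : β → β ⊕ δ) (mp.σ (Sum.inr b)) =
        Sum.map Sum.inl Sum.inl (Sum.inr b) := h
      exact mp.ff _ (embL_inj _ _ h')
    · have h' : Sum.map (Sum.inr : γ → α ⊕ γ) (Sum.inr : δ → β ⊕ δ) (mq.σ (Sum.inr d)) =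
        Sum.map Sum.inr Sum.inr (Sum.inr d) := h
      exact mq.ff _ (embR_inj _ _ h')
  spec := by
    intro u v
    constructor
    · intro h
      unfold tensRel at h
      rcases h with ⟨x, y, hxy, rfl, rfl⟩ | ⟨x, y, hxy, rfl, rfl⟩
      · rw [tσ_embL, (mp.spec _ _).mp hxy]
      · rw [tσ_embR, (mq.spec _ _).mp hxy]
    · intro h
      rcases u with (a | c) | (b | d)
      · exact Or.inl ⟨Sum.inl a, mp.σ (Sum.inl a), (mp.spec _ _).mpr rfl, rfl,
          by rw [← h]; exact tσ_embL mp mq (Sum.inl a)⟩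
      · exact Or.inr ⟨Sum.inl c, mq.σ (Sum.inl c), (mq.spec _ _).mpr rfl, rfl,
          by rw [← h]; exact tσ_embR mp mq (Sum.inl c)⟩
      · exact Or.inl ⟨Sum.inr b, mp.σ (Sum.inr b), (mp.spec _ _).mpr rfl, rfl,
          by rw [← h]; exact tσ_embL mp mq (Sum.inr b)⟩
      · exact Or.inr ⟨Sum.inr d, mq.σ (Sum.inr d), (mq.spec _ _).mpr rfl, rfl,
          by rw [← h]; exact tσ_embR mp mq (Sum.inr d)⟩
  cap := by
    rintro (b | d)
    · have h : tσ mp mq (Sum.inr (Sum.inl b)) =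
        Sum.map Sum.inl Sum.inl (mp.σ (Sum.inr b)) := rfl
      rw [h, mp.cap]
      rfl
    · have h : tσ mp mq (Sum.inr (Sum.inr d)) =
        Sum.map Sum.inr Sum.inr (mq.σ (Sum.inr d)) := rfl
      rw [h, mq.cap]
      rfl

end TensSec

/-! ### Matchings for composite diagrams -/

section CompSec

variable {α β γ : Type} {p : α ⊕ β → α ⊕ β → Prop} {q : β ⊕ γ → β ⊕ γ → Prop}

/-- second endpoint of the walk from a middle point, on the `q` side. -/
def qend (mp : Mtch p) (mq : Mtch q) (b : β) : α ⊕ γ :=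
  match mq.σ (Sum.inl b) with
  | .inr c => .inr c
  | .inl b' => .inl (mp.τ b')

/-- the involution of the composite diagram. -/
def cσ (mp : Mtch p) (mq : Mtch q) : α ⊕ γ → α ⊕ γ
  | .inl a =>
    match mp.σ (.inl a) with
    | .inl a' => .inl a'
    | .inr b => qend mp mq b
  | .inr c => .inl (mp.τ (mq.τ c))

variable (mp : Mtch p) (mq : Mtch q)

theorem qend_c {b c} (h : mq.σ (Sum.inl b) = Sum.inr c) :
    qend mp mq b = Sum.inr c := by
  unfold qend; rw [h]

theorem qend_cup {b b'} (h : mq.σ (Sum.inl b) = Sum.inl b') :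
    qend mp mq b = Sum.inl (mp.τ b') := by
  unfold qend; rw [h]

theorem cσ_inr (c : γ) : cσ mp mq (Sum.inr c) = Sum.inl (mp.τ (mq.τ c)) := rfl

theorem cσ_cup {a a'} (h : mp.σ (Sum.inl a) = Sum.inl a') :
    cσ mp mq (Sum.inl a) = Sum.inl a' := by
  have e : cσ mp mq (Sum.inl a) =
      (match mp.σ (Sum.inl a) with
       | Sum.inl a' => Sum.inl a'
       | Sum.inr b => qend mp mq b) := rfl
  rw [e, h]

theorem cσ_mid {a b} (h : mp.σ (Sum.inl a) = Sum.inr b) :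
    cσ mp mq (Sum.inl a) = qend mp mq b := by
  have e : cσ mp mq (Sum.inl a) =
      (match mp.σ (Sum.inl a) with
       | Sum.inl a' => Sum.inl a'
       | Sum.inr b => qend mp mq b) := rfl
  rw [e, h]

theorem cσ_invol : ∀ u, cσ mp mq (cσ mp mq u) = u := by
  rintro (a | c)
  · rcases h : mp.σ (Sum.inl a) with a' | b
    · rw [cσ_cup mp mq h, cσ_cup mp mq (mp.flip h)]
    · rw [cσ_mid mp mq h]
      rcases h2 : mq.σ (Sum.inl b) with b' | c
      · rw [qend_cup mp mq h2, cσ_mid mp mq (mp.cap' b'), qend_cup mp mq (mq.flip h2),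
          mp.τ_eq (mp.flip h)]
      · rw [qend_c mp mq h2, cσ_inr, mq.τ_eq (mq.flip h2), mp.τ_eq (mp.flip h)]
  · rw [cσ_inr, cσ_mid mp mq (mp.cap' _), qend_c mp mq (mq.cap' _)]

theorem cσ_ff : ∀ u, cσ mp mq u ≠ u := by
  rintro (a | c) h
  · rcases h1 : mp.σ (Sum.inl a) with a' | b
    · rw [cσ_cup mp mq h1] at h
      rw [Sum.inl.inj h] at h1
      exact mp.ff _ h1
    · rw [cσ_mid mp mq h1] at h
      rcases h2 : mq.σ (Sum.inl b) with b' | c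
      · rw [qend_cup mp mq h2] at h
        have hb := mp.cap' b'
        rw [Sum.inl.inj h] at hb
        rw [h1] at hb
        rw [← Sum.inr.inj hb] at h2
        exact mq.ff _ h2
      · rw [qend_c mp mq h2] at h
        cases h
  · rw [cσ_inr] at h
    cases h

/-- the one-step relation used in `compRel`. -/
def stepRel (p : α ⊕ β → α ⊕ β → Prop) (q : β ⊕ γ → β ⊕ γ → Prop) :
    α ⊕ (β ⊕ γ) → α ⊕ (β ⊕ γ) → Prop := fun s t =>
  (∃ x y, p x y ∧ s = Sum.map (fun a => a) Sum.inl x ∧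
                  t = Sum.map (fun a => a) Sum.inl y) ∨
  (∃ x y, q x y ∧ s = Sum.inr x ∧ t = Sum.inr y)

theorem compRel_iff (u v : α ⊕ γ) :
    compRel p q u v ↔ u ≠ v ∧ Relation.ReflTransGen (stepRel p q)
      (Sum.map (fun a => a) Sum.inr u) (Sum.map (fun a => a) Sum.inr v) := Iff.rfl

/-- The (at most two) endpoints of the connected component of a point. -/
def ends (mp : Mtch p) (mq : Mtch q) : α ⊕ (β ⊕ γ) → α ⊕ γ → Prop
  | .inl a, e => e = .inl a ∨ e = cσ mp mq (.inl a)
  | .inr (.inl b), e => e = .inl (mp.τ b) ∨ e = qend mp mq b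
  | .inr (.inr c), e => e = .inr c ∨ e = cσ mp mq (.inr c)

theorem step_ends {s t} (hst : stepRel p q s t) (e : α ⊕ γ) :
    ends mp mq s e ↔ ends mp mq t e := by
  unfold stepRel at hst
  rcases hst with ⟨x, y, hxy, rfl, rfl⟩ | ⟨x, y, hxy, rfl, rfl⟩
  · have hσ : mp.σ x = y := (mp.spec _ _).mp hxy
    rcases x with a | b <;> rcases y with a' | b'
    · show (e = .inl a ∨ e = cσ mp mq (.inl a)) ↔ (e = .inl a' ∨ e = cσ mp mq (.inl a'))
      rw [cσ_cup mp mq hσ, cσ_cup mp mq (mp.flip hσ)]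
      tauto
    · show (e = .inl a ∨ e = cσ mp mq (.inl a)) ↔ (e = .inl (mp.τ b') ∨ e = qend mp mq b')
      rw [cσ_mid mp mq hσ, mp.τ_eq (mp.flip hσ)]
    · show (e = .inl (mp.τ b) ∨ e = qend mp mq b) ↔ (e = .inl a' ∨ e = cσ mp mq (.inl a'))
      rw [cσ_mid mp mq (mp.flip hσ), mp.τ_eq hσ]
    · rw [mp.cap] at hσ
      cases hσ
  · have hσ : mq.σ x = y := (mq.spec _ _).mp hxy
    rcases x with b | c <;> rcases y with b' | c'
    · show (e = .inl (mp.τ b) ∨ e = qend mp mq b) ↔ (e = .inl (mp.τ b') ∨ e = qend mp mq b')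
      rw [qend_cup mp mq hσ, qend_cup mp mq (mq.flip hσ)]
      tauto
    · show (e = .inl (mp.τ b) ∨ e = qend mp mq b) ↔ (e = .inr c' ∨ e = cσ mp mq (.inr c'))
      rw [qend_c mp mq hσ, cσ_inr, mq.τ_eq (mq.flip hσ)]
      tauto
    · show (e = .inr c ∨ e = cσ mp mq (.inr c)) ↔ (e = .inl (mp.τ b') ∨ e = qend mp mq b')
      rw [qend_c mp mq (mq.flip hσ), cσ_inr, mq.τ_eq hσ]
      tauto
    · rw [mq.cap] at hσ
      cases hσ

theorem rtg_ends {s t} (h : Relation.ReflTransGen (stepRel p q) s t) :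
    ∀ e, ends mp mq s e ↔ ends mp mq t e := by
  induction h with
  | refl => exact fun _ => Iff.rfl
  | tail _ h ih => exact fun e => (ih e).trans (step_ends mp mq h e)

theorem cσ_spec : ∀ u v, compRel p q u v ↔ cσ mp mq u = v := by
  intro u v
  rw [compRel_iff]
  constructor
  · rintro ⟨hne, hpath⟩
    have hends := rtg_ends mp mq hpath
    have hv : ends mp mq (Sum.map (fun a => a) Sum.inr v) v := by
      rcases v with a | c
      · exact Or.inl rfl
      · exact Or.inl rfl
    have hu := (hends v).mpr hv
    rcases u with a | c
    · rcases hu with h | h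
      · exact absurd h.symm hne
      · exact h.symm
    · rcases hu with h | h
      · exact absurd h.symm hne
      · exact h.symm
  · intro h
    have hne : u ≠ v := fun he => cσ_ff mp mq v (he ▸ h)
    refine ⟨hne, ?_⟩
    rcases u with a | c
    · rcases h1 : mp.σ (Sum.inl a) with a' | b
      · rw [cσ_cup mp mq h1] at h
        subst h
        exact Relation.ReflTransGen.single
          (Or.inl ⟨Sum.inl a, Sum.inl a', (mp.spec _ _).mpr h1, rfl, rfl⟩)
      · rw [cσ_mid mp mq h1] at h
        rcases h2 : mq.σ (Sum.inl b) with b' | c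
        · rw [qend_cup mp mq h2] at h
          subst h
          refine Relation.ReflTransGen.head
            (Or.inl ⟨Sum.inl a, Sum.inr b, (mp.spec _ _).mpr h1, rfl, rfl⟩) ?_
          refine Relation.ReflTransGen.head
            (Or.inr ⟨Sum.inl b, Sum.inl b', (mq.spec _ _).mpr h2, rfl, rfl⟩) ?_
          exact Relation.ReflTransGen.single
            (Or.inl ⟨Sum.inr b', Sum.inl (mp.τ b'), (mp.spec _ _).mpr (mp.cap b'), rfl, rfl⟩)
        · rw [qend_c mp mq h2] at h
          subst h
          refine Relation.ReflTransGen.head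
            (Or.inl ⟨Sum.inl a, Sum.inr b, (mp.spec _ _).mpr h1, rfl, rfl⟩) ?_
          exact Relation.ReflTransGen.single
            (Or.inr ⟨Sum.inl b, Sum.inr c, (mq.spec _ _).mpr h2, rfl, rfl⟩)
    · rw [cσ_inr] at h
      subst h
      refine Relation.ReflTransGen.head
        (Or.inr ⟨Sum.inr c, Sum.inl (mq.τ c), (mq.spec _ _).mpr (mq.cap c), rfl, rfl⟩) ?_
      exact Relation.ReflTransGen.single
        (Or.inl ⟨Sum.inr (mq.τ c), Sum.inl (mp.τ (mq.τ c)),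
          (mp.spec _ _).mpr (mp.cap _), rfl, rfl⟩)

def compMtch : Mtch (compRel p q) where
  σ := cσ mp mq
  τ := fun c => mp.τ (mq.τ c)
  invol := cσ_invol mp mq
  ff := cσ_ff mp mq
  spec := cσ_spec mp mq
  cap := fun _ => rfl

end CompSec

/-! ### The matching for the transitivity arrow, and existence of matchings -/

def tsig : (Bool ⊕ Bool) ⊕ Bool → (Bool ⊕ Bool) ⊕ Bool
  | .inl (.inl false) => .inr false
  | .inl (.inl true) => .inl (.inr false)
  | .inl (.inr false) => .inl (.inl true)
  | .inl (.inr true) => .inr true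
  | .inr false => .inl (.inl false)
  | .inr true => .inl (.inr true)

def ttau : Bool → Bool ⊕ Bool
  | false => .inl false
  | true => .inr true

def tMtch {V : Type} (x y z : V) : Mtch (GRel (Ar.t x y z)) where
  σ := tsig
  τ := ttau
  invol := by
    have h : ∀ u, tsig (tsig u) = u := by decide
    exact h
  ff := by
    have h : ∀ u, tsig u ≠ u := by decide
    exact h
  spec := by
    intro u v
    simp only [GRel]
    constructor
    · rintro (⟨rfl, rfl⟩ | ⟨rfl, rfl⟩ | ⟨rfl, rfl⟩ | ⟨rfl, rfl⟩ | ⟨rfl, rfl⟩ | ⟨rfl, rfl⟩) <;> rfl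
    · intro h
      subst h
      rcases u with ((_ | _) | (_ | _)) | (_ | _) <;> simp [tsig] <;> tauto
  cap := by
    have h : ∀ b, tsig (Sum.inr b) = Sum.inl (ttau b) := by decide
    exact h

theorem existsMtch {V : Type} : ∀ {A B : Fm V} (f : Ar V A B), rLess f →
    Nonempty (Mtch (GRel f)) := by
  intro A B f
  induction f with
  | id C =>
    exact fun _ => ⟨relabelMtch (fun o : Occ C => o) (fun o => o)
      (fun _ => rfl) (fun _ => rfl)⟩
  | comp g f ihg ihf =>
    intro hf
    have hf' : rLess g ∧ rLess f := hf
    obtain ⟨mf⟩ := ihf hf'.2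
    obtain ⟨mg⟩ := ihg hf'.1
    exact ⟨compMtch mf mg⟩
  | tens f g ihf ihg =>
    intro hf
    have hf' : rLess f ∧ rLess g := hf
    obtain ⟨mf⟩ := ihf hf'.1
    obtain ⟨mg⟩ := ihg hf'.2
    exact ⟨tensMtch mf mg⟩
  | bto P Q R =>
    exact fun _ => ⟨relabelMtch
      ((fun o => match o with
        | Sum.inl (Sum.inl a) => Sum.inl a
        | Sum.inl (Sum.inr b) => Sum.inr (Sum.inl b)
        | Sum.inr c => Sum.inr (Sum.inr c)) :
          Occ (Fm.and (Fm.and P Q) R) → Occ (Fm.and P (Fm.and Q R)))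
      (fun o => match o with
        | Sum.inl a => Sum.inl (Sum.inl a)
        | Sum.inr (Sum.inl b) => Sum.inl (Sum.inr b)
        | Sum.inr (Sum.inr c) => Sum.inr c)
      (by rintro ((a | b) | c) <;> rfl) (by rintro (a | (b | c)) <;> rfl)⟩
  | bfrom P Q R =>
    exact fun _ => ⟨relabelMtch
      ((fun o => match o with
        | Sum.inl a => Sum.inl (Sum.inl a)
        | Sum.inr (Sum.inl b) => Sum.inl (Sum.inr b)
        | Sum.inr (Sum.inr c) => Sum.inr c) :
          Occ (Fm.and P (Fm.and Q R)) → Occ (Fm.and (Fm.and P Q) R))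
      (fun o => match o with
        | Sum.inl (Sum.inl a) => Sum.inl a
        | Sum.inl (Sum.inr b) => Sum.inr (Sum.inl b)
        | Sum.inr c => Sum.inr (Sum.inr c))
      (by rintro (a | (b | c)) <;> rfl) (by rintro ((a | b) | c) <;> rfl)⟩
  | dto P =>
    refine fun _ => ⟨relabelMtch Sum.inl
      (fun o => match o with | Sum.inl a => a | Sum.inr e => nomatch e)
      (fun _ => rfl) ?_⟩
    rintro (a | e)
    · rfl
    · cases e
  | dfrom P =>
    refine fun _ => ⟨corelabelMtch Sum.inl
      (fun o => match o with | Sum.inl a => a | Sum.inr e => nomatch e)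
      (fun _ => rfl) ?_⟩
    rintro (a | e)
    · rfl
    · cases e
  | sto P =>
    refine fun _ => ⟨relabelMtch Sum.inr
      (fun o => match o with | Sum.inr a => a | Sum.inl e => nomatch e)
      (fun _ => rfl) ?_⟩
    rintro (e | a)
    · cases e
    · rfl
  | sfrom P =>
    refine fun _ => ⟨corelabelMtch Sum.inr
      (fun o => match o with | Sum.inr a => a | Sum.inl e => nomatch e)
      (fun _ => rfl) ?_⟩
    rintro (e | a)
    · cases e
    · rfl
  | c P Q =>
    exact fun _ => ⟨relabelMtch Sum.swap Sum.swap
      (fun o => Sum.swap_swap o) (fun o => Sum.swap_swap o)⟩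
  | r x => exact fun hf => (hf : False).elim
  | t x y z => exact fun _ => ⟨tMtch x y z⟩

/-! ### The main induction -/

theorem stmt7_aux {V : Type} : ∀ {A B : Fm V} (f : Ar V A B), rLess f →
    ∀ U : Set (Occ A), FClosed f U → ∀ u v : Occ B, SameAtom u v →
    ((∃ w ∈ U, GRel f (Sum.inl w) (Sum.inr u)) ↔
     (∃ w ∈ U, GRel f (Sum.inl w) (Sum.inr v))) := by
  intro A B f
  induction f with
  | id C =>
    intro _ U hU u v huv
    let m := relabelMtch (fun o : Occ C => o) (fun o => o) (fun _ => rfl) (fun _ => rfl)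
    exact (m.mem_iff U u).trans ((hU u v (Or.inl huv)).trans (m.mem_iff U v).symm)
  | comp g f ihg ihf =>
    intro hf U hU u v huv
    have hf' : rLess g ∧ rLess f := hf
    obtain ⟨mf⟩ := existsMtch f hf'.2
    obtain ⟨mg⟩ := existsMtch g hf'.1
    let m := compMtch mf mg
    have hUf : FClosed f U := by
      intro w w' hw
      apply hU w w'
      rcases hw with h | h | h
      · exact Or.inl h
      · exact Or.inr (Or.inl h)
      · refine Or.inr (Or.inr ?_)
        exact (m.spec _ _).mpr (cσ_cup mf mg ((mf.spec _ _).mp h))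
    have hU' : FClosed g {b | mf.τ b ∈ U} := by
      intro b b' hb
      rcases hb with h | h | h
      · have h2 := ihf hf'.2 U hUf b b' h
        rwa [mf.mem_iff U b, mf.mem_iff U b'] at h2
      · have h2 := ihf hf'.2 U hUf b' b h
        rw [mf.mem_iff U b', mf.mem_iff U b] at h2
        exact h2.symm
      · have hσ : mg.σ (Sum.inl b) = Sum.inl b' := (mg.spec _ _).mp h
        have hcup : cσ mf mg (Sum.inl (mf.τ b)) = Sum.inl (mf.τ b') := by
          rw [cσ_mid mf mg (mf.cap' b), qend_cup mf mg hσ]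
        exact hU _ _ (Or.inr (Or.inr ((m.spec _ _).mpr hcup)))
    have hmain := ihg hf'.1 _ hU' u v huv
    rw [mg.mem_iff _ u, mg.mem_iff _ v] at hmain
    exact (m.mem_iff U u).trans (hmain.trans (m.mem_iff U v).symm)
  | tens f g ihf ihg =>
    intro hf U hU u v huv
    have hf' : rLess f ∧ rLess g := hf
    obtain ⟨mf⟩ := existsMtch f hf'.1
    obtain ⟨mg⟩ := existsMtch g hf'.2
    let m := tensMtch mf mg
    refine (m.mem_iff U u).trans (Iff.trans ?_ (m.mem_iff U v).symm)
    cases huv with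
    | andl h =>
      have hU1 : FClosed f {a | Sum.inl a ∈ U} := by
        intro a a' ha
        rcases ha with h' | h' | h'
        · exact hU _ _ (Or.inl (SameAtom.andl h'))
        · exact hU _ _ (Or.inr (Or.inl (SameAtom.andl h')))
        · exact hU _ _ (Or.inr (Or.inr
            (Or.inl ⟨Sum.inl a, Sum.inl a', h', rfl, rfl⟩)))
      have h2 := ihf hf'.1 _ hU1 _ _ h
      rwa [mf.mem_iff _ _, mf.mem_iff _ _] at h2
    | andr h =>
      have hU2 : FClosed g {a | Sum.inr a ∈ U} := by
        intro a a' ha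
        rcases ha with h' | h' | h'
        · exact hU _ _ (Or.inl (SameAtom.andr h'))
        · exact hU _ _ (Or.inr (Or.inl (SameAtom.andr h')))
        · exact hU _ _ (Or.inr (Or.inr
            (Or.inr ⟨Sum.inl a, Sum.inl a', h', rfl, rfl⟩)))
      have h2 := ihg hf'.2 _ hU2 _ _ h
      rwa [mg.mem_iff _ _, mg.mem_iff _ _] at h2
  | bto P Q R =>
    intro _ U hU u v huv
    let m := relabelMtch
      ((fun o => match o with
        | Sum.inl (Sum.inl a) => Sum.inl a
        | Sum.inl (Sum.inr b) => Sum.inr (Sum.inl b)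
        | Sum.inr c => Sum.inr (Sum.inr c)) :
          Occ (Fm.and (Fm.and P Q) R) → Occ (Fm.and P (Fm.and Q R)))
      (fun o => match o with
        | Sum.inl a => Sum.inl (Sum.inl a)
        | Sum.inr (Sum.inl b) => Sum.inl (Sum.inr b)
        | Sum.inr (Sum.inr c) => Sum.inr c)
      (by rintro ((a | b) | c) <;> rfl) (by rintro (a | (b | c)) <;> rfl)
    refine (m.mem_iff U u).trans (Iff.trans ?_ (m.mem_iff U v).symm)
    apply hU
    refine Or.inl ?_
    cases huv with
    | andl h =>
      cases h with
      | andl h' => exact SameAtom.andl h'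
      | andr h' => exact SameAtom.andr (SameAtom.andl h')
    | andr h => exact SameAtom.andr (SameAtom.andr h)
  | bfrom P Q R =>
    intro _ U hU u v huv
    let m := relabelMtch
      ((fun o => match o with
        | Sum.inl a => Sum.inl (Sum.inl a)
        | Sum.inr (Sum.inl b) => Sum.inl (Sum.inr b)
        | Sum.inr (Sum.inr c) => Sum.inr c) :
          Occ (Fm.and P (Fm.and Q R)) → Occ (Fm.and (Fm.and P Q) R))
      (fun o => match o with
        | Sum.inl (Sum.inl a) => Sum.inl a
        | Sum.inl (Sum.inr b) => Sum.inr (Sum.inl b)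
        | Sum.inr c => Sum.inr (Sum.inr c))
      (by rintro (a | (b | c)) <;> rfl) (by rintro ((a | b) | c) <;> rfl)
    refine (m.mem_iff U u).trans (Iff.trans ?_ (m.mem_iff U v).symm)
    apply hU
    refine Or.inl ?_
    cases huv with
    | andl h => exact SameAtom.andl (SameAtom.andl h)
    | andr h =>
      cases h with
      | andl h' => exact SameAtom.andl (SameAtom.andr h')
      | andr h' => exact SameAtom.andr h'
  | dto P =>
    intro _ U hU u v huv
    let m := relabelMtch (Sum.inl : Occ P → Occ P ⊕ Occ (Fm.top (V := V)))
      (fun o => match o with | Sum.inl a => a | Sum.inr e => nomatch e)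
      (fun _ => rfl) (by rintro (a | e); exacts [rfl, Empty.elim e])
    refine (m.mem_iff U u).trans (Iff.trans ?_ (m.mem_iff U v).symm)
    exact hU _ _ (Or.inl (SameAtom.andl huv))
  | dfrom P =>
    intro _ U hU u v huv
    let m := corelabelMtch (Sum.inl : Occ P → Occ P ⊕ Occ (Fm.top (V := V)))
      (fun o => match o with | Sum.inl a => a | Sum.inr e => nomatch e)
      (fun _ => rfl) (by rintro (a | e); exacts [rfl, Empty.elim e])
    refine (m.mem_iff U u).trans (Iff.trans ?_ (m.mem_iff U v).symm)
    cases huv with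
    | andl h => exact hU _ _ (Or.inl h)
    | andr h => cases h
  | sto P =>
    intro _ U hU u v huv
    let m := relabelMtch (Sum.inr : Occ P → Occ (Fm.top (V := V)) ⊕ Occ P)
      (fun o => match o with | Sum.inr a => a | Sum.inl e => nomatch e)
      (fun _ => rfl) (by rintro (e | a); exacts [Empty.elim e, rfl])
    refine (m.mem_iff U u).trans (Iff.trans ?_ (m.mem_iff U v).symm)
    exact hU _ _ (Or.inl (SameAtom.andr huv))
  | sfrom P =>
    intro _ U hU u v huv
    let m := corelabelMtch (Sum.inr : Occ P → Occ (Fm.top (V := V)) ⊕ Occ P)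
      (fun o => match o with | Sum.inr a => a | Sum.inl e => nomatch e)
      (fun _ => rfl) (by rintro (e | a); exacts [Empty.elim e, rfl])
    refine (m.mem_iff U u).trans (Iff.trans ?_ (m.mem_iff U v).symm)
    cases huv with
    | andl h => cases h
    | andr h => exact hU _ _ (Or.inl h)
  | c P Q =>
    intro _ U hU u v huv
    let m := relabelMtch (Sum.swap : Occ Q ⊕ Occ P → Occ P ⊕ Occ Q) Sum.swap
      (fun o => Sum.swap_swap o) (fun o => Sum.swap_swap o)
    refine (m.mem_iff U u).trans (Iff.trans ?_ (m.mem_iff U v).symm)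
    apply hU
    refine Or.inl ?_
    cases huv with
    | andl h => exact SameAtom.andr h
    | andr h => exact SameAtom.andl h
  | r x =>
    intro hf
    exact (hf : False).elim
  | t x y z =>
    intro _ U hU u v huv
    let m := tMtch x y z
    refine (m.mem_iff U u).trans (Iff.trans ?_ (m.mem_iff U v).symm)
    cases huv
    have h1 := hU (Sum.inl false) (Sum.inl true)
      (Or.inl (SameAtom.andl (SameAtom.atom x y)))
    have h2 := hU (Sum.inl true) (Sum.inr false)
      (Or.inr (Or.inr (Or.inr (Or.inr (Or.inr (Or.inr (Or.inl ⟨rfl, rfl⟩)))))))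
    have h3 := hU (Sum.inr false) (Sum.inr true)
      (Or.inl (SameAtom.andr (SameAtom.atom y z)))
    exact h1.trans (h2.trans h3)

/-- for r-less f and f-closed U, a member of U is connected by Gf
to the occurrence of x in an atomic subformula x R y of B iff a member of U is
connected by Gf to the occurrence of y. -/
theorem stmt7 {V : Type} {A B : Fm V} (f : Ar V A B) (hf : rLess f)
    (U : Set (Occ A)) (hU : FClosed f U) (u v : Occ B) (huv : SameAtom u v) :
    (∃ w ∈ U, GRel f (Sum.inl w) (Sum.inr u)) ↔
    (∃ w ∈ U, GRel f (Sum.inl w) (Sum.inr v)) := by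
  exact stmt7_aux f hf U hU u v huv

end DP
end

section
/- For f : A ⊢ B an r-less arrow term of S≤, every maximal sequence (the f-closed set generated by a single occurrence of a variable in A) is a set {u₁, u₂, …, u₂ₙ₋₁, u₂ₙ} of occurrences of variables in A, for some n ≥ 1, such that u₂ᵢ₋₁ ≤ u₂ᵢ is a subformula of A for 1 ≤ i ≤ n and u₂ⱼ and u₂ⱼ₊₁ are connected by a cup of Gf for 1 ≤ j ≤ n−1; moreover there exists an atomic subformula x≤y of B such that u₁ is connected by Gf to the occurrence of x in x≤y and u₂ₙ is connected by Gf to the occurrence of y in x≤y. -/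
/-! Formalization of categories of proofs for linear equality (Dosen-Petric),
with the generality functor G into the category Br of Brauerian diagrams,
represented here by the matching relation on occurrences of variables. -/

namespace DP

/-- The maximal sequence generated by an occurrence: the smallest f-closed set
containing it. -/
def genClosed {V : Type} {A B : Fm V} (f : Ar V A B) (u0 : Occ A) : Set (Occ A) :=
  ⋂₀ {U : Set (Occ A) | FClosed f U ∧ u0 ∈ U}

/-! ### Auxiliary machinery -/

variable {V : Type}

/-- The side of an occurrence: `false` for left, `true` for right. -/
def side : ∀ {A : Fm V}, Occ A → Bool
  | .rel _ _, b => b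
  | .top, o => o.elim
  | .and _ _, .inl u => side u
  | .and _ _, .inr u => side u

/-- The other occurrence in the same atomic formula. -/
def mate : ∀ {A : Fm V}, Occ A → Occ A
  | .rel _ _, b => !b
  | .top, o => o.elim
  | .and _ _, .inl u => .inl (mate u)
  | .and _ _, .inr u => .inr (mate u)

theorem mate_mate : ∀ {A : Fm V} (u : Occ A), mate (mate u) = u
  | .rel _ _, b => by cases b <;> rfl
  | .top, o => o.elim
  | .and _ _, .inl u => by simp [mate, mate_mate u]; rfl
  | .and _ _, .inr u => by simp [mate, mate_mate u]; rfl

theorem side_mate : ∀ {A : Fm V} (u : Occ A), side (mate u) = !side u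
  | .rel _ _, b => by cases b <;> rfl
  | .top, o => o.elim
  | .and _ _, .inl u => by simp [mate, side, side_mate u]
  | .and _ _, .inr u => by simp [mate, side, side_mate u]

theorem mate_inj {A : Fm V} {u v : Occ A} (h : mate u = mate v) : u = v := by
  have := congrArg mate h; rwa [mate_mate, mate_mate] at this

theorem sameAtom_spec : ∀ {A : Fm V} {u v : Occ A}, SameAtom u v →
    side u = false ∧ v = mate u := by
  intro A u v h
  induction h with
  | atom x y => exact ⟨rfl, rfl⟩
  | andl h ih => exact ⟨ih.1, by simp [mate, ih.2]; rfl⟩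
  | andr h ih => exact ⟨ih.1, by simp [mate, ih.2]; rfl⟩

theorem sameAtom_mk : ∀ {A : Fm V} (u : Occ A), side u = false → SameAtom u (mate u)
  | .rel x y, b, hb => by
      cases b
      · exact .atom x y
      · exact absurd hb (by simp [side])
  | .top, o, _ => o.elim
  | .and _ _, .inl u, hb => .andl (sameAtom_mk u hb)
  | .and _ _, .inr u, hb => .andr (sameAtom_mk u hb)
section Chain

variable {α : Type} (sd : α → Bool) (mt : α → α)

inductive ChainL (cup : α → α → Prop) : α → α → List α → Prop
  | pair (u : α) : sd u = false → ChainL cup u (mt u) [u, mt u]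
  | cons (u : α) {v w : α} {l : List α} : sd u = false → cup (mt u) v →
      ChainL cup v w l → ChainL cup u w (u :: mt u :: l)

variable {sd mt} {cup cup' : α → α → Prop}

theorem ChainL.ne_nil {u w l} (h : ChainL sd mt cup u w l) : l ≠ [] := by
  cases h <;> simp

theorem ChainL.head_eq {u w l} (h : ChainL sd mt cup u w l) : ∃ t, l = u :: t := by
  cases h <;> exact ⟨_, rfl⟩

theorem ChainL.mono {u w l} (hc : ∀ a b, cup a b → cup' a b)
    (h : ChainL sd mt cup u w l) : ChainL sd mt cup' u w l := by
  induction h with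
  | pair u hu => exact .pair u hu
  | cons u hu hcup _ ih => exact .cons u hu (hc _ _ hcup) ih

theorem ChainL.append {u w v z l l'} (h : ChainL sd mt cup u w l)
    (hc : cup w v) (h' : ChainL sd mt cup v z l') :
    ChainL sd mt cup u z (l ++ l') := by
  induction h with
  | pair u hu => exact .cons u hu hc h'
  | cons u hu hcup _ ih => exact .cons u hu hcup (ih hc)

theorem ChainL.map {α' : Type} {sd' : α' → Bool} {mt' : α' → α'}
    {cup'' : α' → α' → Prop} (e : α → α')
    (hs : ∀ a, sd' (e a) = sd a) (hm : ∀ a, mt' (e a) = e (mt a))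
    (hc : ∀ a b, cup a b → cup'' (e a) (e b))
    {u w l} (h : ChainL sd mt cup u w l) :
    ChainL sd' mt' cup'' (e u) (e w) (l.map e) := by
  induction h with
  | pair u hu =>
      simp only [List.map_cons, List.map_nil]
      rw [← hm]
      exact .pair _ (by rw [hs, hu])
  | cons u hu hcup _ ih =>
      simp only [List.map_cons]
      rw [← hm]
      exact .cons _ (by rw [hs, hu]) (by rw [hm]; exact hc _ _ hcup) ih

theorem ChainL.unique (hf : ∀ a b c, cup a b → cup a c → b = c)
    {u w w' l l'} (h : ChainL sd mt cup u w l) (h' : ChainL sd mt cup u w' l')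
    (hw : ∀ x, ¬ cup w x) (hw' : ∀ x, ¬ cup w' x) : l = l' ∧ w = w' := by
  induction h generalizing l' w' with
  | pair u hu =>
      cases h' with
      | pair => exact ⟨rfl, rfl⟩
      | cons _ _ hcup _ => exact absurd hcup (hw _)
  | @cons u v w l hu hcup hch ih =>
      cases h' with
      | pair => exact absurd hcup (hw' _)
      | @cons _ v' w' l' _ hcup' hch' =>
          obtain rfl : v = v' := hf _ _ _ hcup hcup'
          obtain ⟨h1, h2⟩ := ih hch' hw hw'
          exact ⟨by rw [h1], h2⟩

theorem ChainL.length_eq {u w l} (h : ChainL sd mt cup u w l) :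
    ∃ m, 1 ≤ m ∧ l.length = 2 * m := by
  induction h with
  | pair => exact ⟨1, le_refl _, rfl⟩
  | cons u _ _ _ ih =>
      obtain ⟨m, hm, hl⟩ := ih
      exact ⟨m + 1, by omega, by simp only [List.length_cons, hl]; omega⟩

theorem ChainL.getD_facts (d : α) {u w l} (h : ChainL sd mt cup u w l) :
    l.getD 0 d = u ∧ l.getD (l.length - 1) d = w ∧
    (∀ i, 2*i+1 < l.length → sd (l.getD (2*i) d) = false ∧
        l.getD (2*i+1) d = mt (l.getD (2*i) d)) ∧
    (∀ j, 2*j+2 < l.length → cup (l.getD (2*j+1) d) (l.getD (2*j+2) d)) := by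
  induction h with
  | pair u hu =>
      refine ⟨rfl, rfl, fun i hi => ?_, fun j hj => ?_⟩
      · simp only [List.length_cons, List.length_nil] at hi
        have hi0 : i = 0 := by omega
        subst hi0
        simp [hu]
      · simp only [List.length_cons, List.length_nil] at hj
        omega
  | @cons u v w l hu hcup hch ih =>
      obtain ⟨ih0, ihlast, ihmate, ihcup⟩ := ih
      obtain ⟨m, hm, hlen⟩ := hch.length_eq
      refine ⟨rfl, ?_, fun i hi => ?_, fun j hj => ?_⟩
      · have e : (u :: mt u :: l).length - 1 = (l.length - 1) + 2 := by
          simp only [List.length_cons]; omega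
        rw [e]
        simpa using ihlast
      · match i with
        | 0 => exact ⟨hu, rfl⟩
        | i + 1 =>
            have e1 : 2 * (i+1) = (2*i) + 2 := by ring
            have e2 : 2 * (i+1) + 1 = (2*i+1) + 2 := by ring
            rw [e2, e1]
            simp only [List.getD_cons_succ]
            refine ihmate i ?_
            simp only [List.length_cons] at hi
            omega
      · match j with
        | 0 =>
            obtain ⟨t, rfl⟩ := hch.head_eq
            simpa using hcup
        | j + 1 =>
            have e1 : 2 * (j+1) + 1 = (2*j+1) + 2 := by ring
            have e2 : 2 * (j+1) + 2 = (2*j+2) + 2 := by ring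
            rw [e1, e2]
            simp only [List.getD_cons_succ]
            refine ihcup j ?_
            simp only [List.length_cons] at hj
            omega

theorem ChainL.side_getD (d : α) (hsm : ∀ a, sd (mt a) = !sd a)
    {u w l} (h : ChainL sd mt cup u w l) :
    ∀ i < l.length, sd (l.getD i d) = decide (i % 2 = 1) := by
  intro i hi
  obtain ⟨-, -, hmate, -⟩ := h.getD_facts d
  obtain ⟨m, hm, hlen⟩ := h.length_eq
  rcases Nat.even_or_odd i with he | ho
  · obtain ⟨k, rfl⟩ : ∃ k, i = 2 * k := by
      rcases he with ⟨k, hk⟩; exact ⟨k, by omega⟩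
    have h1 := (hmate k (by omega)).1
    have h2 : (2*k) % 2 = 0 := by omega
    rw [h1, h2]
    simp
  · obtain ⟨k, rfl⟩ : ∃ k, i = 2 * k + 1 := ho
    have h2 := hmate k (by omega)
    rw [h2.2, hsm, h2.1]
    have h3 : (2*k+1) % 2 = 1 := by omega
    rw [h3]
    simp

theorem ChainL.getD_inj (d : α) (hsm : ∀ a, sd (mt a) = !sd a)
    (hmm : ∀ a, mt (mt a) = a)
    (hf : ∀ a b c, cup a b → cup a c → b = c)
    (hsy : ∀ a b, cup a b → cup b a)
    {u w l} (h : ChainL sd mt cup u w l) (hstart : ∀ x, ¬ cup u x) :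
    ∀ i j, i < l.length → j < l.length → l.getD i d = l.getD j d → i = j := by
  obtain ⟨h0, -, hmate, hcup⟩ := h.getD_facts d
  have hside := h.side_getD d hsm
  obtain ⟨m0, hm0, hlen⟩ := h.length_eq
  have main : ∀ n i j, i + j = n → i < l.length → j < l.length →
      l.getD i d = l.getD j d → i = j := by
    intro n
    induction n using Nat.strong_induction_on with
    | _ n ih =>
      intro i j hn hi hj heq
      have hpar : i % 2 = j % 2 := by
        have h1 := hside i hi
        have h2 := hside j hj
        rw [heq] at h1
        have := h1.symm.trans h2
        simp only [decide_eq_decide] at this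
        omega
      rcases Nat.even_or_odd i with he | ho
      · obtain ⟨k, rfl⟩ : ∃ k, i = 2 * k := by
          rcases he with ⟨k', hk'⟩; exact ⟨k', by omega⟩
        obtain ⟨k', rfl⟩ : ∃ k', j = 2 * k' := by
          refine ⟨j / 2, by omega⟩
        match k, k' with
        | 0, 0 => rfl
        | 0, k'+1 =>
            exfalso
            have c2 := hcup k' (by omega)
            have e : 2 * (k'+1) = 2*k'+2 := by ring
            rw [e] at heq
            rw [← heq] at c2
            simp only [Nat.mul_zero] at c2
            rw [h0] at c2
            exact hstart _ (hsy _ _ c2)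
        | k+1, 0 =>
            exfalso
            have c1 := hcup k (by omega)
            have e : 2 * (k+1) = 2*k+2 := by ring
            rw [e] at heq
            rw [heq] at c1
            simp only [Nat.mul_zero] at c1
            rw [h0] at c1
            exact hstart _ (hsy _ _ c1)
        | k+1, k'+1 =>
            have e1 : 2 * (k+1) = 2*k+2 := by ring
            have e2 : 2 * (k'+1) = 2*k'+2 := by ring
            rw [e1] at heq hi ⊢
            rw [e2] at heq hj ⊢
            have c1 := hcup k (by omega)
            have c2 := hcup k' (by omega)
            rw [heq] at c1
            have hcc := hf _ _ _ (hsy _ _ c1) (hsy _ _ c2)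
            have := ih (2*k+1 + (2*k'+1)) (by omega) (2*k+1) (2*k'+1) rfl
              (by omega) (by omega) hcc
            omega
      · obtain ⟨k, rfl⟩ : ∃ k, i = 2 * k + 1 := ho
        obtain ⟨k', rfl⟩ : ∃ k', j = 2 * k' + 1 := by
          refine ⟨j / 2, by omega⟩
        have m1 := (hmate k (by omega)).2
        have m2 := (hmate k' (by omega)).2
        rw [m1, m2] at heq
        have heq2 : l.getD (2*k) d = l.getD (2*k') d := by
          have := congrArg mt heq
          rwa [hmm, hmm] at this
        have := ih (2*k + 2*k') (by omega) (2*k) (2*k') rfl (by omega) (by omega) heq2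
        omega
  exact fun i j hi hj heq => main (i + j) i j rfl hi hj heq

end Chain
/-! ### Matching data -/

/-- Data describing the Brauerian diagram of an r-less arrow term:
a relabelling `φ` of target occurrences plus cups on source occurrences,
together with the chain invariants. -/
structure GoodData {V : Type} (A B : Fm V) where
  φ : Occ B → Occ A
  cup : Occ A → Occ A → Prop
  inj : Function.Injective φ
  symm : ∀ a b, cup a b → cup b a
  func : ∀ a b c, cup a b → cup a c → b = c
  disj : ∀ a b, cup a b → a ∉ Set.range φ
  sideCup : ∀ a b, cup a b → side b = !side a
  sideφ : ∀ b, side (φ b) = side b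
  inv : ∀ b : Occ B, side b = false →
      ∃ l, ChainL side mate cup (φ b) (φ (mate b)) l
  cov : ∀ a : Occ A, ∃ (b : Occ B) (l : List (Occ A)), side b = false ∧
      ChainL side mate cup (φ b) (φ (mate b)) l ∧ a ∈ l

/-- The matching relation determined by matching data. -/
def MRel {V : Type} {A B : Fm V} (D : GoodData A B) :
    Occ A ⊕ Occ B → Occ A ⊕ Occ B → Prop :=
  fun u v => (∃ a a', D.cup a a' ∧ u = .inl a ∧ v = .inl a') ∨ relabel D.φ u v

theorem GoodData.cup_irrefl {V : Type} {A B : Fm V} (D : GoodData A B)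
    {a : Occ A} (h : D.cup a a) : False := by
  have := D.sideCup _ _ h; cases side a <;> simp_all

theorem GoodData.not_cup_range {V : Type} {A B : Fm V} (D : GoodData A B)
    (b : Occ B) (x : Occ A) (h : D.cup (D.φ b) x) : False :=
  D.disj _ _ h ⟨b, rfl⟩

/-- Matching data with no cups, from a bijective atom-preserving relabelling. -/
def relabelData {V : Type} {A B : Fm V} (φ0 : Occ B → Occ A)
    (hinj : Function.Injective φ0) (hsurj : Function.Surjective φ0)
    (hside : ∀ b, side (φ0 b) = side b)
    (hmate : ∀ b, φ0 (mate b) = mate (φ0 b)) : GoodData A B where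
  φ := φ0
  cup _ _ := False
  inj := hinj
  symm := by simp
  func := by simp
  disj := by simp
  sideCup := by simp
  sideφ := hside
  inv b hb := by
    refine ⟨[φ0 b, mate (φ0 b)], ?_⟩
    rw [hmate]
    refine .pair _ ?_
    rw [hside, hb]
  cov a := by
    obtain ⟨b, rfl⟩ := hsurj a
    by_cases hb : side b = false
    · refine ⟨b, [φ0 b, mate (φ0 b)], hb, ?_, ?_⟩
      · rw [hmate]; refine .pair _ ?_; rw [hside, hb]
      · exact List.mem_cons_self
    · have hb' : side (mate b) = false := by
        rw [side_mate]; cases hsb : side b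
        · exact absurd hsb hb
        · rfl
      refine ⟨mate b, [φ0 (mate b), mate (φ0 (mate b))], hb', ?_, ?_⟩
      · have e : φ0 (mate (mate b)) = mate (φ0 (mate b)) := hmate (mate b)
        rw [e]
        refine .pair _ ?_
        rw [hside, hb']
      · rw [hmate, mate_mate]
        exact List.mem_cons_of_mem _ List.mem_cons_self

theorem MRel_relabelData {V : Type} {A B : Fm V} (φ0 : Occ B → Occ A)
    (hinj : Function.Injective φ0) (hsurj : Function.Surjective φ0)
    (hside : ∀ b, side (φ0 b) = side b)
    (hmate : ∀ b, φ0 (mate b) = mate (φ0 b)) :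
    MRel (relabelData φ0 hinj hsurj hside hmate) = relabel φ0 := by
  funext u v
  simp [MRel, relabelData]

theorem corelabel_eq_relabel {α β : Type} (ψ : α → β) (φ0 : β → α)
    (h1 : ∀ b, ψ (φ0 b) = b) (h2 : ∀ a, φ0 (ψ a) = a) :
    corelabel ψ = relabel φ0 := by
  funext u v
  simp only [corelabel, relabel, eq_iff_iff]
  constructor
  · rintro (⟨o, rfl, rfl⟩ | ⟨o, rfl, rfl⟩)
    · exact Or.inl ⟨ψ o, by rw [h2], rfl⟩
    · exact Or.inr ⟨ψ o, rfl, by rw [h2]⟩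
  · rintro (⟨o, rfl, rfl⟩ | ⟨o, rfl, rfl⟩)
    · exact Or.inl ⟨φ0 o, rfl, by rw [h1]⟩
    · exact Or.inr ⟨φ0 o, by rw [h1], rfl⟩
/-! ### Data for the generators and composition -/

section Constructions

variable {V : Type}

def GoodData.tens {A B C D : Fm V} (D1 : GoodData A B) (D2 : GoodData C D) :
    GoodData (A.and C) (B.and D) where
  φ := Sum.map D1.φ D2.φ
  cup := fun a a' =>
    (∃ p q, D1.cup p q ∧ a = .inl p ∧ a' = .inl q) ∨
    (∃ p q, D2.cup p q ∧ a = .inr p ∧ a' = .inr q)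
  inj := Sum.map_injective.2 ⟨D1.inj, D2.inj⟩
  symm := by
    rintro a a' (⟨p, q, h, rfl, rfl⟩ | ⟨p, q, h, rfl, rfl⟩)
    · exact Or.inl ⟨q, p, D1.symm _ _ h, rfl, rfl⟩
    · exact Or.inr ⟨q, p, D2.symm _ _ h, rfl, rfl⟩
  func := by
    rintro a b c (⟨p, q, h, rfl, rfl⟩ | ⟨p, q, h, rfl, rfl⟩)
        (⟨p', q', h', he, rfl⟩ | ⟨p', q', h', he, rfl⟩)
    · obtain rfl : p = p' := by injection he
      rw [D1.func _ _ _ h h']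
    · cases he
    · cases he
    · obtain rfl : p = p' := by injection he
      rw [D2.func _ _ _ h h']
  disj := by
    rintro a a' (⟨p, q, h, rfl, rfl⟩ | ⟨p, q, h, rfl, rfl⟩) ⟨b, hb⟩ <;> rcases b with b | b
    · exact D1.disj _ _ h ⟨b, by injection hb⟩
    · exact absurd hb (by simp)
    · exact absurd hb (by simp)
    · exact D2.disj _ _ h ⟨b, by injection hb⟩
  sideCup := by
    rintro a a' (⟨p, q, h, rfl, rfl⟩ | ⟨p, q, h, rfl, rfl⟩)
    · exact D1.sideCup _ _ h
    · exact D2.sideCup _ _ h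
  sideφ := by
    rintro (b | b)
    · exact D1.sideφ b
    · exact D2.sideφ b
  inv := by
    rintro (b | b) hb
    · obtain ⟨l, hl⟩ := D1.inv b hb
      exact ⟨l.map Sum.inl, hl.map Sum.inl (fun _ => rfl) (fun _ => rfl)
        (fun p q h => Or.inl ⟨p, q, h, rfl, rfl⟩)⟩
    · obtain ⟨l, hl⟩ := D2.inv b hb
      exact ⟨l.map Sum.inr, hl.map Sum.inr (fun _ => rfl) (fun _ => rfl)
        (fun p q h => Or.inr ⟨p, q, h, rfl, rfl⟩)⟩
  cov := by
    rintro (a | a)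
    · obtain ⟨b, l, hb, hch, hmem⟩ := D1.cov a
      exact ⟨.inl b, l.map Sum.inl, hb, hch.map Sum.inl (fun _ => rfl) (fun _ => rfl)
        (fun p q h => Or.inl ⟨p, q, h, rfl, rfl⟩), List.mem_map_of_mem hmem⟩
    · obtain ⟨b, l, hb, hch, hmem⟩ := D2.cov a
      exact ⟨.inr b, l.map Sum.inr, hb, hch.map Sum.inr (fun _ => rfl) (fun _ => rfl)
        (fun p q h => Or.inr ⟨p, q, h, rfl, rfl⟩), List.mem_map_of_mem hmem⟩

theorem GRel_tens_eq {A B C D : Fm V} (D1 : GoodData A B) (D2 : GoodData C D) :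
    tensRel (MRel D1) (MRel D2) = MRel (D1.tens D2) := by
  funext u v
  simp only [tensRel, MRel, relabel, GoodData.tens, eq_iff_iff]
  constructor
  · rintro (⟨x, y, hxy, rfl, rfl⟩ | ⟨x, y, hxy, rfl, rfl⟩)
    · rcases hxy with ⟨a, a', hc, rfl, rfl⟩ | ⟨o, rfl, rfl⟩ | ⟨o, rfl, rfl⟩
      · exact Or.inl ⟨.inl a, .inl a', Or.inl ⟨a, a', hc, rfl, rfl⟩, rfl, rfl⟩
      · exact Or.inr (Or.inl ⟨.inl o, rfl, rfl⟩)
      · exact Or.inr (Or.inr ⟨.inl o, rfl, rfl⟩)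
    · rcases hxy with ⟨a, a', hc, rfl, rfl⟩ | ⟨o, rfl, rfl⟩ | ⟨o, rfl, rfl⟩
      · exact Or.inl ⟨.inr a, .inr a', Or.inr ⟨a, a', hc, rfl, rfl⟩, rfl, rfl⟩
      · exact Or.inr (Or.inl ⟨.inr o, rfl, rfl⟩)
      · exact Or.inr (Or.inr ⟨.inr o, rfl, rfl⟩)
  · rintro (⟨a, a', (⟨p, q, h, rfl, rfl⟩ | ⟨p, q, h, rfl, rfl⟩), rfl, rfl⟩ |
        ⟨(o | o), rfl, rfl⟩ | ⟨(o | o), rfl, rfl⟩)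
    · exact Or.inl ⟨.inl p, .inl q, Or.inl ⟨p, q, h, rfl, rfl⟩, rfl, rfl⟩
    · exact Or.inr ⟨.inl p, .inl q, Or.inl ⟨p, q, h, rfl, rfl⟩, rfl, rfl⟩
    · exact Or.inl ⟨.inl (D1.φ o), .inr o, Or.inr (Or.inl ⟨o, rfl, rfl⟩), rfl, rfl⟩
    · exact Or.inr ⟨.inl (D2.φ o), .inr o, Or.inr (Or.inl ⟨o, rfl, rfl⟩), rfl, rfl⟩
    · exact Or.inl ⟨.inr o, .inl (D1.φ o), Or.inr (Or.inr ⟨o, rfl, rfl⟩), rfl, rfl⟩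
    · exact Or.inr ⟨.inr o, .inl (D2.φ o), Or.inr (Or.inr ⟨o, rfl, rfl⟩), rfl, rfl⟩

/-- The cups of a composite diagram. -/
def compCup {A B C : Fm V} (D1 : GoodData A B) (D2 : GoodData B C) :
    Occ A → Occ A → Prop :=
  fun a a' => D1.cup a a' ∨ (∃ b b', D2.cup b b' ∧ a = D1.φ b ∧ a' = D1.φ b')

theorem GoodData.chain_eq {A B : Fm V} (D : GoodData A B) {u w w' l l'}
    (h : ChainL side mate D.cup u w l) (h' : ChainL side mate D.cup u w' l')
    (hw : w ∈ Set.range D.φ) (hw' : w' ∈ Set.range D.φ) : l = l' :=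
  (ChainL.unique D.func h h' (fun x hx => D.disj _ _ hx hw)
    (fun x hx => D.disj _ _ hx hw')).1

/-- Splicing the chains of the first diagram along a chain of the second. -/
theorem splice {A B C : Fm V} (D1 : GoodData A B) (D2 : GoodData B C) :
    ∀ {b w lB}, ChainL side mate D2.cup b w lB →
    ∃ lA, ChainL side mate (compCup D1 D2) (D1.φ b) (D1.φ w) lA ∧
      ∀ b' ∈ lB, side b' = false →
        ∀ l1, ChainL side mate D1.cup (D1.φ b') (D1.φ (mate b')) l1 →
          ∀ a ∈ l1, a ∈ lA := by
  intro b w lB h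
  induction h with
  | pair b hb =>
      obtain ⟨l0, hl0⟩ := D1.inv b hb
      refine ⟨l0, hl0.mono (fun _ _ h => Or.inl h), ?_⟩
      intro b' hb' hsb' l1 hl1 a ha
      simp only [List.mem_cons, List.not_mem_nil, or_false] at hb'
      rcases hb' with rfl | rfl
      · rwa [D1.chain_eq hl1 hl0 ⟨_, rfl⟩ ⟨_, rfl⟩] at ha
      · rw [side_mate, hb] at hsb'; exact absurd hsb' (by simp)
  | @cons b v w l hb hcup hch ih =>
      obtain ⟨lA', hchA', hmemA'⟩ := ih
      obtain ⟨l0, hl0⟩ := D1.inv b hb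
      refine ⟨l0 ++ lA', (hl0.mono (fun _ _ h => Or.inl h)).append
        (Or.inr ⟨mate b, v, hcup, rfl, rfl⟩) hchA', ?_⟩
      intro b' hb' hsb' l1 hl1 a ha
      simp only [List.mem_cons] at hb'
      rcases hb' with rfl | rfl | hb'
      · refine List.mem_append_left _ ?_
        rwa [D1.chain_eq hl1 hl0 ⟨_, rfl⟩ ⟨_, rfl⟩] at ha
      · rw [side_mate, hb] at hsb'; exact absurd hsb' (by simp)
      · exact List.mem_append_right _ (hmemA' _ hb' hsb' l1 hl1 a ha)

def GoodData.comp {A B C : Fm V} (D1 : GoodData A B) (D2 : GoodData B C) :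
    GoodData A C where
  φ := D1.φ ∘ D2.φ
  cup := compCup D1 D2
  inj := D1.inj.comp D2.inj
  symm := by
    rintro a a' (h | ⟨b, b', h, rfl, rfl⟩)
    · exact Or.inl (D1.symm _ _ h)
    · exact Or.inr ⟨b', b, D2.symm _ _ h, rfl, rfl⟩
  func := by
    rintro a b c (h | ⟨p, q, h, rfl, rfl⟩) (h' | ⟨p', q', h', he, rfl⟩)
    · exact D1.func _ _ _ h h'
    · subst he; exact (D1.not_cup_range _ _ h).elim
    · exact (D1.not_cup_range _ _ h').elim
    · obtain rfl : p = p' := D1.inj he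
      rw [D2.func _ _ _ h h']
  disj := by
    rintro a a' (h | ⟨p, q, h, rfl, rfl⟩) ⟨c, hc⟩
    · exact D1.disj _ _ h ⟨D2.φ c, hc⟩
    · exact D2.disj _ _ h ⟨c, D1.inj hc⟩
  sideCup := by
    rintro a a' (h | ⟨p, q, h, rfl, rfl⟩)
    · exact D1.sideCup _ _ h
    · rw [D1.sideφ, D1.sideφ]; exact D2.sideCup _ _ h
  sideφ := by
    intro c
    show side (D1.φ (D2.φ c)) = side c
    rw [D1.sideφ, D2.sideφ]
  inv := by
    intro c hc
    obtain ⟨lB, hlB⟩ := D2.inv c hc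
    obtain ⟨lA, hchA, -⟩ := splice D1 D2 hlB
    exact ⟨lA, hchA⟩
  cov := by
    intro a
    obtain ⟨b0, l1, hb0, hch1, ha⟩ := D1.cov a
    obtain ⟨c, lB, hc, hchB, hbmem⟩ := D2.cov b0
    obtain ⟨lA, hchA, hmem⟩ := splice D1 D2 hchB
    exact ⟨c, lA, hc, hchA, hmem b0 hbmem hb0 l1 hch1 a ha⟩

section CompEq

variable {A B C : Fm V} (D1 : GoodData A B) (D2 : GoodData B C)

/-- The set of endpoints of the connected component of a vertex in the
composite graph. -/
def EP : Occ A ⊕ (Occ B ⊕ Occ C) → Occ A ⊕ Occ C → Prop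
  | .inl a, e => e = .inl a ∨ (∃ a', D1.cup a a' ∧ e = .inl a') ∨
      (∃ b b', a = D1.φ b ∧ D2.cup b b' ∧ e = .inl (D1.φ b')) ∨
      (∃ c, a = D1.φ (D2.φ c) ∧ e = .inr c)
  | .inr (.inl b), e => e = .inl (D1.φ b) ∨
      (∃ b', D2.cup b b' ∧ e = .inl (D1.φ b')) ∨
      (∃ c, b = D2.φ c ∧ e = .inr c)
  | .inr (.inr c), e => e = .inr c ∨ e = .inl (D1.φ (D2.φ c))

theorem EP_cup1 {a a' : Occ A} (hc : D1.cup a a') (e) :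
    EP D1 D2 (.inl a) e → EP D1 D2 (.inl a') e := by
  rintro (rfl | ⟨a'', hc', rfl⟩ | ⟨b, b', rfl, hc2, rfl⟩ | ⟨c, rfl, rfl⟩)
  · exact Or.inr (Or.inl ⟨a, D1.symm _ _ hc, rfl⟩)
  · exact Or.inl (by rw [D1.func _ _ _ hc hc'])
  · exact (D1.not_cup_range _ _ hc).elim
  · exact (D1.not_cup_range _ _ hc).elim

theorem EP_phi1 (o : Occ B) (e) :
    EP D1 D2 (.inl (D1.φ o)) e ↔ EP D1 D2 (.inr (.inl o)) e := by
  constructor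
  · rintro (rfl | ⟨a', hc, rfl⟩ | ⟨b, b', heq, hc2, rfl⟩ | ⟨c, heq, rfl⟩)
    · exact Or.inl rfl
    · exact (D1.not_cup_range _ _ hc).elim
    · obtain rfl : o = b := D1.inj heq
      exact Or.inr (Or.inl ⟨b', hc2, rfl⟩)
    · exact Or.inr (Or.inr ⟨c, D1.inj heq, rfl⟩)
  · rintro (rfl | ⟨b', hc2, rfl⟩ | ⟨c, heq, rfl⟩)
    · exact Or.inl rfl
    · exact Or.inr (Or.inr (Or.inl ⟨o, b', rfl, hc2, rfl⟩))
    · exact Or.inr (Or.inr (Or.inr ⟨c, by rw [heq], rfl⟩))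

theorem EP_cup2 {b b' : Occ B} (hc : D2.cup b b') (e) :
    EP D1 D2 (.inr (.inl b)) e → EP D1 D2 (.inr (.inl b')) e := by
  rintro (rfl | ⟨b'', hc', rfl⟩ | ⟨c, rfl, rfl⟩)
  · exact Or.inr (Or.inl ⟨b, D2.symm _ _ hc, rfl⟩)
  · exact Or.inl (by rw [D2.func _ _ _ hc hc'])
  · exact (D2.not_cup_range _ _ hc).elim

theorem EP_phi2 (c0 : Occ C) (e) :
    EP D1 D2 (.inr (.inl (D2.φ c0))) e ↔ EP D1 D2 (.inr (.inr c0)) e := by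
  constructor
  · rintro (rfl | ⟨b', hc2, rfl⟩ | ⟨c, heq, rfl⟩)
    · exact Or.inr rfl
    · exact (D2.not_cup_range _ _ hc2).elim
    · obtain rfl : c0 = c := D2.inj heq
      exact Or.inl rfl
  · rintro (rfl | rfl)
    · exact Or.inr (Or.inr ⟨c0, rfl, rfl⟩)
    · exact Or.inl rfl

/-- The edge relation used in `compRel`. -/
def CE : Occ A ⊕ (Occ B ⊕ Occ C) → Occ A ⊕ (Occ B ⊕ Occ C) → Prop :=
  fun s t =>
    (∃ x y, MRel D1 x y ∧ s = Sum.map (fun a => a) Sum.inl x ∧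
            t = Sum.map (fun a => a) Sum.inl y) ∨
    (∃ x y, MRel D2 x y ∧ s = Sum.inr x ∧ t = Sum.inr y)

theorem EP_edge {s t} (h : CE D1 D2 s t) (e : Occ A ⊕ Occ C) :
    EP D1 D2 s e ↔ EP D1 D2 t e := by
  rcases h with ⟨x, y, hp, rfl, rfl⟩ | ⟨x, y, hq, rfl, rfl⟩
  · rcases hp with ⟨a, a', hc, rfl, rfl⟩ | ⟨o, rfl, rfl⟩ | ⟨o, rfl, rfl⟩
    · exact ⟨EP_cup1 D1 D2 hc e, EP_cup1 D1 D2 (D1.symm _ _ hc) e⟩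
    · exact EP_phi1 D1 D2 o e
    · exact (EP_phi1 D1 D2 o e).symm
  · rcases hq with ⟨b, b', hc, rfl, rfl⟩ | ⟨o, rfl, rfl⟩ | ⟨o, rfl, rfl⟩
    · exact ⟨EP_cup2 D1 D2 hc e, EP_cup2 D1 D2 (D2.symm _ _ hc) e⟩
    · exact EP_phi2 D1 D2 o e
    · exact (EP_phi2 D1 D2 o e).symm

theorem EP_path {s t} (hp : Relation.ReflTransGen (CE D1 D2) s t) :
    ∀ e, EP D1 D2 s e ↔ EP D1 D2 t e := by
  induction hp with
  | refl => exact fun e => Iff.rfl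
  | tail h1 h2 ih => exact fun e => (ih e).trans (EP_edge D1 D2 h2 e)

theorem EP_self (v : Occ A ⊕ Occ C) :
    EP D1 D2 (Sum.map (fun a => a) Sum.inr v) v := by
  rcases v with a | c
  · exact Or.inl rfl
  · exact Or.inl rfl

theorem GRel_comp_eq {A B C : Fm V} (D1 : GoodData A B) (D2 : GoodData B C) :
    compRel (MRel D1) (MRel D2) = MRel (D1.comp D2) := by
  funext u v
  simp only [compRel, MRel, relabel, GoodData.comp, eq_iff_iff]
  constructor
  · rintro ⟨hne, hpath⟩
    have hEP : ∀ e, EP D1 D2 (Sum.map (fun a => a) Sum.inr u) e ↔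
        EP D1 D2 (Sum.map (fun a => a) Sum.inr v) e :=
      EP_path D1 D2 hpath
    have hv : EP D1 D2 (Sum.map (fun a => a) Sum.inr u) v :=
      (hEP v).2 (EP_self D1 D2 v)
    rcases u with a | c
    · rcases hv with rfl | ⟨a', hc, rfl⟩ | ⟨b, b', rfl, hc2, rfl⟩ | ⟨c, rfl, rfl⟩
      · exact absurd rfl hne
      · exact Or.inl ⟨a, a', Or.inl hc, rfl, rfl⟩
      · exact Or.inl ⟨_, _, Or.inr ⟨b, b', hc2, rfl, rfl⟩, rfl, rfl⟩
      · exact Or.inr (Or.inl ⟨c, rfl, rfl⟩)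
    · rcases hv with rfl | rfl
      · exact absurd rfl hne
      · exact Or.inr (Or.inr ⟨c, rfl, rfl⟩)
  · rintro (⟨a, a', (hc | ⟨b, b', hc2, rfl, rfl⟩), rfl, rfl⟩ |
        ⟨c, rfl, rfl⟩ | ⟨c, rfl, rfl⟩)
    · refine ⟨?_, ?_⟩
      · intro he
        obtain rfl : a = a' := by injection he
        exact D1.cup_irrefl hc
      · exact Relation.ReflTransGen.single
          (Or.inl ⟨.inl a, .inl a', Or.inl ⟨a, a', hc, rfl, rfl⟩, rfl, rfl⟩)
    · refine ⟨?_, ?_⟩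
      · intro he
        obtain rfl : b = b' := D1.inj (by injection he)
        exact D2.cup_irrefl hc2
      · refine Relation.ReflTransGen.head
          (Or.inl ⟨.inl (D1.φ b), .inr b, Or.inr (Or.inl ⟨b, rfl, rfl⟩), rfl, rfl⟩) ?_
        refine Relation.ReflTransGen.head
          (Or.inr ⟨.inl b, .inl b', Or.inl ⟨b, b', hc2, rfl, rfl⟩, rfl, rfl⟩) ?_
        exact Relation.ReflTransGen.single
          (Or.inl ⟨.inr b', .inl (D1.φ b'), Or.inr (Or.inr ⟨b', rfl, rfl⟩), rfl, rfl⟩)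
    · refine ⟨by simp, ?_⟩
      refine Relation.ReflTransGen.head
        (Or.inl ⟨.inl (D1.φ (D2.φ c)), .inr (D2.φ c),
          Or.inr (Or.inl ⟨D2.φ c, rfl, rfl⟩), rfl, rfl⟩) ?_
      exact Relation.ReflTransGen.single
        (Or.inr ⟨.inl (D2.φ c), .inr c, Or.inr (Or.inl ⟨c, rfl, rfl⟩), rfl, rfl⟩)
    · refine ⟨by simp, ?_⟩
      refine Relation.ReflTransGen.head
        (Or.inr ⟨.inr c, .inl (D2.φ c), Or.inr (Or.inr ⟨c, rfl, rfl⟩), rfl, rfl⟩) ?_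
      exact Relation.ReflTransGen.single
        (Or.inl ⟨.inr (D2.φ c), .inl (D1.φ (D2.φ c)),
          Or.inr (Or.inr ⟨D2.φ c, rfl, rfl⟩), rfl, rfl⟩)

end CompEq

def tData (x y z : V) : GoodData (Fm.and (.rel x y) (.rel y z)) (Fm.rel x z) where
  φ := fun b => match b with | false => .inl false | true => .inr true
  cup := fun a a' => (a = .inl true ∧ a' = .inr false) ∨ (a = .inr false ∧ a' = .inl true)
  inj := by rintro b b' h; cases b <;> cases b' <;> simp_all <;> rfl
  symm := by
    rintro a a' (⟨rfl, rfl⟩ | ⟨rfl, rfl⟩)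
    · exact Or.inr ⟨rfl, rfl⟩
    · exact Or.inl ⟨rfl, rfl⟩
  func := by
    rintro a b c (⟨rfl, rfl⟩ | ⟨rfl, rfl⟩) (⟨h1, rfl⟩ | ⟨h1, rfl⟩)
    · rfl
    · cases h1
    · cases h1
    · rfl
  disj := by
    rintro a a' (⟨rfl, -⟩ | ⟨rfl, -⟩) ⟨b, hb⟩ <;> cases b <;>
      first
        | (injection hb with h; cases h)
        | injection hb
  sideCup := by rintro _ _ (⟨rfl, rfl⟩ | ⟨rfl, rfl⟩) <;> rfl
  sideφ := by intro b; cases b <;> rfl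
  inv := by
    intro b hb
    cases b
    · refine ⟨[.inl false, .inl true, .inr false, .inr true], ?_⟩
      exact .cons (Sum.inl false) rfl (Or.inl ⟨rfl, rfl⟩) (.pair (Sum.inr false) rfl)
    · exact absurd hb (by simp [side])
  cov := by
    intro a
    refine ⟨false, [.inl false, .inl true, .inr false, .inr true], rfl,
      .cons (Sum.inl false) rfl (Or.inl ⟨rfl, rfl⟩) (.pair (Sum.inr false) rfl), ?_⟩
    rcases a with b | b <;> cases b
    · exact List.Mem.head _
    · exact List.Mem.tail _ (List.Mem.head _)
    · exact List.Mem.tail _ (List.Mem.tail _ (List.Mem.head _))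
    · exact List.Mem.tail _ (List.Mem.tail _ (List.Mem.tail _ (List.Mem.head _)))

theorem GRel_t_eq (x y z : V) : GRel (.t x y z) = MRel (tData x y z) := by
  funext u v
  simp only [GRel, MRel, relabel, tData, eq_iff_iff]
  constructor
  · rintro (⟨rfl, rfl⟩ | ⟨rfl, rfl⟩ | ⟨rfl, rfl⟩ | ⟨rfl, rfl⟩ | ⟨rfl, rfl⟩ | ⟨rfl, rfl⟩)
    · exact Or.inr (Or.inl ⟨false, rfl, rfl⟩)
    · exact Or.inr (Or.inr ⟨false, rfl, rfl⟩)
    · exact Or.inr (Or.inl ⟨true, rfl, rfl⟩)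
    · exact Or.inr (Or.inr ⟨true, rfl, rfl⟩)
    · exact Or.inl ⟨_, _, Or.inl ⟨rfl, rfl⟩, rfl, rfl⟩
    · exact Or.inl ⟨_, _, Or.inr ⟨rfl, rfl⟩, rfl, rfl⟩
  · rintro (⟨a, a', (⟨rfl, rfl⟩ | ⟨rfl, rfl⟩), rfl, rfl⟩ | ⟨b, rfl, rfl⟩ | ⟨b, rfl, rfl⟩)
    · exact Or.inr (Or.inr (Or.inr (Or.inr (Or.inl ⟨rfl, rfl⟩))))
    · exact Or.inr (Or.inr (Or.inr (Or.inr (Or.inr ⟨rfl, rfl⟩))))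
    · cases b
      · exact Or.inl ⟨rfl, rfl⟩
      · exact Or.inr (Or.inr (Or.inl ⟨rfl, rfl⟩))
    · cases b
      · exact Or.inr (Or.inl ⟨rfl, rfl⟩)
      · exact Or.inr (Or.inr (Or.inr (Or.inl ⟨rfl, rfl⟩)))

theorem exists_good : ∀ {A B : Fm V} (f : Ar V A B), rLess f →
    ∃ D : GoodData A B, GRel f = MRel D := by
  intro A B f hf
  induction f with
  | id A =>
      exact ⟨relabelData (fun o => o) (fun a b h => h) (fun a => ⟨a, rfl⟩)
        (fun _ => rfl) (fun _ => rfl), by exact (MRel_relabelData _ _ _ _ _).symm⟩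
  | comp g f ihg ihf =>
      simp only [rLess] at hf
      obtain ⟨Dg, hDg⟩ := ihg hf.1
      obtain ⟨Df, hDf⟩ := ihf hf.2
      refine ⟨Df.comp Dg, ?_⟩
      show compRel (GRel f) (GRel g) = _
      rw [hDf, hDg, GRel_comp_eq]
  | tens f g ihf ihg =>
      simp only [rLess] at hf
      obtain ⟨Df, hDf⟩ := ihf hf.1
      obtain ⟨Dg, hDg⟩ := ihg hf.2
      refine ⟨Df.tens Dg, ?_⟩
      show tensRel (GRel f) (GRel g) = _
      rw [hDf, hDg, GRel_tens_eq]
  | bto A B C =>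
      refine ⟨relabelData (fun o =>
        match o with
        | .inl (.inl a) => .inl a
        | .inl (.inr b) => .inr (.inl b)
        | .inr c => .inr (.inr c)) ?_ ?_ ?_ ?_, by rw [MRel_relabelData]; rfl⟩
      · refine Function.LeftInverse.injective (g := fun o =>
          match o with
          | .inl a => .inl (.inl a)
          | .inr (.inl b) => .inl (.inr b)
          | .inr (.inr c) => .inr c) ?_
        rintro ((a|b)|c) <;> rfl
      · refine Function.RightInverse.surjective (g := fun o =>
          match o with
          | .inl a => .inl (.inl a)
          | .inr (.inl b) => .inl (.inr b)
          | .inr (.inr c) => .inr c) ?_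
        rintro (a|(b|c)) <;> rfl
      · rintro ((a|b)|c) <;> rfl
      · rintro ((a|b)|c) <;> rfl
  | bfrom A B C =>
      refine ⟨relabelData (fun o =>
        match o with
        | .inl a => .inl (.inl a)
        | .inr (.inl b) => .inl (.inr b)
        | .inr (.inr c) => .inr c) ?_ ?_ ?_ ?_, by rw [MRel_relabelData]; rfl⟩
      · refine Function.LeftInverse.injective (g := fun o =>
          match o with
          | .inl (.inl a) => .inl a
          | .inl (.inr b) => .inr (.inl b)
          | .inr c => .inr (.inr c)) ?_
        rintro (a|(b|c)) <;> rfl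
      · refine Function.RightInverse.surjective (g := fun o =>
          match o with
          | .inl (.inl a) => .inl a
          | .inl (.inr b) => .inr (.inl b)
          | .inr c => .inr (.inr c)) ?_
        rintro ((a|b)|c) <;> rfl
      · rintro (a|(b|c)) <;> rfl
      · rintro (a|(b|c)) <;> rfl
  | dto A =>
      refine ⟨relabelData Sum.inl ?_ ?_ ?_ ?_, by exact (MRel_relabelData _ _ _ _ _).symm⟩
      · exact Sum.inl_injective
      · rintro (a|e)
        · exact ⟨a, rfl⟩
        · exact e.elim
      · intro b; rfl
      · intro b; rfl
  | dfrom A =>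
      refine ⟨relabelData (fun o => match o with | .inl a => a | .inr e => e.elim)
        ?_ ?_ ?_ ?_, ?_⟩
      · refine Function.LeftInverse.injective (g := Sum.inl) ?_
        rintro (a|e)
        · rfl
        · exact e.elim
      · intro a; exact ⟨.inl a, rfl⟩
      · rintro (a|e)
        · rfl
        · exact e.elim
      · rintro (a|e)
        · rfl
        · exact e.elim
      · refine Eq.trans ?_ (MRel_relabelData _ _ _ _ _).symm
        show corelabel Sum.inl = _
        refine corelabel_eq_relabel Sum.inl _ ?_ ?_
        · rintro (a|e)
          · rfl
          · exact e.elim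
        · intro a; rfl
  | sto A =>
      refine ⟨relabelData Sum.inr ?_ ?_ ?_ ?_, by exact (MRel_relabelData _ _ _ _ _).symm⟩
      · exact Sum.inr_injective
      · rintro (e|a)
        · exact e.elim
        · exact ⟨a, rfl⟩
      · intro b; rfl
      · intro b; rfl
  | sfrom A =>
      refine ⟨relabelData (fun o => match o with | .inl e => e.elim | .inr a => a)
        ?_ ?_ ?_ ?_, ?_⟩
      · refine Function.LeftInverse.injective (g := Sum.inr) ?_
        rintro (e|a)
        · exact e.elim
        · rfl
      · intro a; exact ⟨.inr a, rfl⟩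
      · rintro (e|a)
        · exact e.elim
        · rfl
      · rintro (e|a)
        · exact e.elim
        · rfl
      · refine Eq.trans ?_ (MRel_relabelData _ _ _ _ _).symm
        show corelabel Sum.inr = _
        refine corelabel_eq_relabel Sum.inr _ ?_ ?_
        · rintro (e|a)
          · exact e.elim
          · rfl
        · intro a; rfl
  | c A B =>
      refine ⟨relabelData Sum.swap ?_ ?_ ?_ ?_, by exact (MRel_relabelData _ _ _ _ _).symm⟩
      · exact Sum.swap_leftInverse.injective
      · exact Sum.swap_leftInverse.surjective
      · rintro (a|b) <;> rfl
      · rintro (a|b) <;> rfl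
  | r x => simp [rLess] at hf
  | t x y z => exact ⟨tData x y z, GRel_t_eq x y z⟩

end Constructions
theorem getD_mem' {α : Type} (l : List α) (d : α) {i : ℕ} (h : i < l.length) :
    l.getD i d ∈ l := by
  rw [List.getD_eq_getElem l d h]
  exact List.getElem_mem h

/-- structure of maximal sequences. -/
theorem stmt8 {V : Type} {A B : Fm V} (f : Ar V A B) (hf : rLess f) (u0 : Occ A) :
    ∃ n : ℕ, 1 ≤ n ∧ ∃ u : ℕ → Occ A,
      Set.InjOn u (Set.Iio (2 * n)) ∧
      genClosed f u0 = u '' Set.Iio (2 * n) ∧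
      (∀ i < n, SameAtom (u (2 * i)) (u (2 * i + 1))) ∧
      (∀ j, j + 1 < n → GRel f (Sum.inl (u (2 * j + 1))) (Sum.inl (u (2 * j + 2)))) ∧
      ∃ ox oy : Occ B, SameAtom ox oy ∧
        GRel f (Sum.inl (u 0)) (Sum.inr ox) ∧
        GRel f (Sum.inl (u (2 * n - 1))) (Sum.inr oy) := by
  obtain ⟨D, hD⟩ := exists_good f hf
  obtain ⟨b, l, hb, hch, hmem⟩ := D.cov u0
  obtain ⟨m, hm1, hlen⟩ := hch.length_eq
  obtain ⟨h0, hlast, hmate, hcup⟩ := hch.getD_facts u0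
  have hsideD := hch.side_getD u0 (fun a => side_mate a)
  have hinj := hch.getD_inj u0 (fun a => side_mate a) (fun a => mate_mate a)
      D.func D.symm (fun x hx => D.disj _ _ hx ⟨b, rfl⟩)
  set u : ℕ → Occ A := fun i => l.getD i u0 with hu
  -- one-directional closure of the chain set
  have step : ∀ p q : Occ A,
      (SameAtom p q ∨ SameAtom q p ∨ GRel f (Sum.inl p) (Sum.inl q)) →
      p ∈ l → q ∈ l := by
    intro p q hpq hp
    obtain ⟨i, hi, hgi⟩ := List.mem_iff_getElem.1 hp
    rw [← List.getD_eq_getElem l u0 hi] at hgi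
    have hsp := hsideD i hi
    rw [hgi] at hsp
    rcases hpq with hsa | hsa | hg
    · obtain ⟨hps, rfl⟩ := sameAtom_spec hsa
      obtain ⟨k, rfl⟩ : ∃ k, i = 2 * k := by
        refine ⟨i / 2, ?_⟩
        rw [hps] at hsp
        simp only [Bool.false_eq, decide_eq_false_iff_not] at hsp
        omega
      rw [← hgi, ← (hmate k (by omega)).2]
      exact getD_mem' l u0 (by omega)
    · obtain ⟨hqs, rfl⟩ := sameAtom_spec hsa
      obtain ⟨k, rfl⟩ : ∃ k, i = 2 * k + 1 := by
        refine ⟨i / 2, ?_⟩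
        rw [side_mate, hqs] at hsp
        simp only [Bool.not_false, Bool.true_eq, decide_eq_true_eq] at hsp
        omega
      have e1 := (hmate k (by omega)).2
      have h2 : mate q = mate (l.getD (2 * k) u0) := by rw [← hgi, e1]
      rw [mate_inj h2]
      exact getD_mem' l u0 (by omega)
    · rw [hD] at hg
      rcases hg with ⟨a, a', hc, ha, ha'⟩ | ⟨o, ho1, ho2⟩ | ⟨o, ho1, ho2⟩
      · obtain rfl : p = a := by injection ha
        obtain rfl : q = a' := by injection ha'
        -- p is at position i
        rcases Nat.even_or_odd i with he | ho
        · obtain ⟨k, rfl⟩ : ∃ k, i = 2 * k := by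
            rcases he with ⟨k, hk⟩; exact ⟨k, by omega⟩
          match k with
          | 0 =>
              exfalso
              rw [show (2 * 0 : ℕ) = 0 from rfl, h0] at hgi
              exact D.not_cup_range b _ (by rw [← hgi] at hc; exact hc)
          | k + 1 =>
              have e : 2 * (k + 1) = 2 * k + 2 := by ring
              rw [e] at hgi hi
              have hc2 := hcup k (by omega)
              rw [hgi] at hc2
              obtain rfl := D.func _ _ _ hc (D.symm _ _ hc2)
              exact getD_mem' l u0 (by omega)
        · obtain ⟨k, rfl⟩ : ∃ k, i = 2 * k + 1 := ho
          by_cases hlt : 2 * k + 2 < l.length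
          · have hc2 := hcup k hlt
            rw [hgi] at hc2
            obtain rfl := D.func _ _ _ hc hc2
            exact getD_mem' l u0 hlt
          · exfalso
            have : 2 * k + 1 = l.length - 1 := by omega
            rw [this, hlast] at hgi
            exact D.not_cup_range (mate b) _ (by rw [← hgi] at hc; exact hc)
      · exact absurd ho2 (by simp)
      · exact absurd ho1 (by simp)
  have hsym : ∀ p q : Occ A,
      (SameAtom p q ∨ SameAtom q p ∨ GRel f (Sum.inl p) (Sum.inl q)) →
      (SameAtom q p ∨ SameAtom p q ∨ GRel f (Sum.inl q) (Sum.inl p)) := by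
    intro p q hpq
    rcases hpq with h | h | h
    · exact Or.inr (Or.inl h)
    · exact Or.inl h
    · refine Or.inr (Or.inr ?_)
      rw [hD] at h ⊢
      rcases h with ⟨a, a', hc, ha, ha'⟩ | ⟨o, ho1, ho2⟩ | ⟨o, ho1, ho2⟩
      · exact Or.inl ⟨a', a, D.symm _ _ hc, ha', ha⟩
      · exact absurd ho2 (by simp)
      · exact absurd ho1 (by simp)
  have hclosed : FClosed f {a : Occ A | a ∈ l} := by
    intro p q hpq
    exact ⟨step p q hpq, step q p (hsym p q hpq)⟩
  have himg : u '' Set.Iio (2 * m) = {a : Occ A | a ∈ l} := by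
    ext a
    constructor
    · rintro ⟨i, hi, rfl⟩
      exact getD_mem' l u0 (by simpa [hlen] using hi)
    · intro ha
      obtain ⟨i, hi, hgi⟩ := List.mem_iff_getElem.1 ha
      refine ⟨i, by simpa [hlen] using hi, ?_⟩
      rw [hu]
      simp only
      rw [List.getD_eq_getElem l u0 hi, hgi]
  refine ⟨m, hm1, u, ?_, ?_, ?_, ?_, b, mate b, sameAtom_mk b hb, ?_, ?_⟩
  · intro i hi j hj heq
    exact hinj i j (by simpa [hlen] using hi) (by simpa [hlen] using hj) heq
  · rw [himg]
    apply subset_antisymm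
    · intro x hx
      exact Set.mem_sInter.1 hx _ ⟨hclosed, hmem⟩
    · intro a ha
      simp only [genClosed, Set.mem_sInter, Set.mem_setOf_eq]
      rintro U ⟨hU, hu0U⟩
      -- every element of the chain is in U, by induction along positions
      obtain ⟨i0, hi0, hgi0⟩ := List.mem_iff_getElem.1 hmem
      obtain ⟨i, hi, hgi⟩ := List.mem_iff_getElem.1 ha
      rw [← List.getD_eq_getElem l u0 hi0] at hgi0
      rw [← List.getD_eq_getElem l u0 hi] at hgi
      have adj : ∀ j, j + 1 < l.length →
          (l.getD j u0 ∈ U ↔ l.getD (j + 1) u0 ∈ U) := by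
        intro j hj
        rcases Nat.even_or_odd j with he | ho
        · obtain ⟨k, rfl⟩ : ∃ k, j = 2 * k := by
            rcases he with ⟨k, hk⟩; exact ⟨k, by omega⟩
          have hmk := hmate k (by omega)
          refine hU _ _ (Or.inl ?_)
          rw [hmk.2]
          exact sameAtom_mk _ hmk.1
        · obtain ⟨k, rfl⟩ : ∃ k, j = 2 * k + 1 := ho
          have hck := hcup k (by omega)
          refine hU _ _ (Or.inr (Or.inr ?_))
          rw [hD]
          exact Or.inl ⟨_, _, hck, rfl, rfl⟩
      have hall : ∀ j, j < l.length → (l.getD j u0 ∈ U ↔ l.getD 0 u0 ∈ U) := by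
        intro j
        induction j with
        | zero => exact fun _ => Iff.rfl
        | succ j ih =>
            intro hj
            exact ((adj j hj).symm).trans (ih (by omega))
      rw [← hgi]
      rw [(hall i hi)]
      rw [← (hall i0 hi0)]
      rw [hgi0]
      exact hu0U
  · intro i hi
    have hmk := hmate i (by omega)
    have : u (2 * i + 1) = mate (u (2 * i)) := hmk.2
    rw [this]
    exact sameAtom_mk _ hmk.1
  · intro j hj
    have hck := hcup j (by omega)
    rw [hD]
    exact Or.inl ⟨_, _, hck, rfl, rfl⟩
  · rw [hD]
    refine Or.inr (Or.inl ⟨b, ?_, rfl⟩)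
    have : u 0 = D.φ b := h0
    rw [this]
  · rw [hD]
    refine Or.inr (Or.inl ⟨mate b, ?_, rfl⟩)
    have : u (2 * m - 1) = D.φ (mate b) := by
      have : (2 * m - 1 : ℕ) = l.length - 1 := by omega
      rw [hu]; simp only; rw [this, hlast]
    rw [this]

end DP
end
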